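/- arXiv:1201.0496 — 5 statements merged into one kernel-verified Lean document; each statement's English description precedes it below -/
import Mathlib

section
/- Every continuous group automorphism Φ of GL(n,ℂ) (a group automorphism that is continuous with continuous inverse) satisfying Φ(h) = h for all invertible diagonal matrices h is conjugation by a diagonal matrix: there exists t ∈ T such that Φ(g) = t g t⁻¹ for all g ∈ GL(n,ℂ). -/
open Matrix

namespace Aux1

variable {n : ℕ}

/-- Elementary transvection as an element of `GL (Fin n) ℂ`. -/
def U (i j : Fin n) (hij : i ≠ j) (c : ℂ) : GL (Fin n) ℂ :=
  ⟨transvection i j c, transvection i j (-c),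
    by rw [transvection_mul_transvection_same _ _ hij, add_neg_cancel, transvection_zero],
    by rw [transvection_mul_transvection_same _ _ hij, neg_add_cancel, transvection_zero]⟩

@[simp] lemma U_val (i j : Fin n) (hij : i ≠ j) (c : ℂ) :
    (U i j hij c : Matrix (Fin n) (Fin n) ℂ) = transvection i j c := rfl

lemma U_mul (i j : Fin n) (hij : i ≠ j) (c d : ℂ) :
    U i j hij c * U i j hij d = U i j hij (c + d) :=
  Units.ext (transvection_mul_transvection_same _ _ hij c d)

@[simp] lemma U_zero (i j : Fin n) (hij : i ≠ j) : U i j hij 0 = 1 :=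
  Units.ext (transvection_zero _ _)

lemma U_inv (i j : Fin n) (hij : i ≠ j) (c : ℂ) : (U i j hij c)⁻¹ = U i j hij (-c) :=
  Units.ext rfl

lemma U_inj {i j : Fin n} {hij : i ≠ j} {c d : ℂ} (h : U i j hij c = U i j hij d) : c = d := by
  have := congrArg (fun g : GL (Fin n) ℂ => (g : Matrix (Fin n) (Fin n) ℂ) i j) h
  simpa [transvection, one_apply_ne hij] using this

/-- Invertible diagonal matrix as an element of `GL (Fin n) ℂ`. -/
def Dg (d : Fin n → ℂˣ) : GL (Fin n) ℂ :=
  ⟨diagonal (fun k => (d k : ℂ)), diagonal (fun k => (((d k)⁻¹ : ℂˣ) : ℂ)),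
    by rw [diagonal_mul_diagonal]; simp,
    by rw [diagonal_mul_diagonal]; simp⟩

@[simp] lemma Dg_val (d : Fin n → ℂˣ) :
    (Dg d : Matrix (Fin n) (Fin n) ℂ) = diagonal (fun k => (d k : ℂ)) := rfl

@[simp] lemma Dg_inv_val (d : Fin n → ℂˣ) :
    (((Dg d)⁻¹ : GL (Fin n) ℂ) : Matrix (Fin n) (Fin n) ℂ)
      = diagonal (fun k => (((d k)⁻¹ : ℂˣ) : ℂ)) := rfl

lemma Dg_isDiag (d : Fin n → ℂˣ) : (Dg d : Matrix (Fin n) (Fin n) ℂ).IsDiag :=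
  isDiag_diagonal _

lemma diag_conj_entry (v w : Fin n → ℂ) (M : Matrix (Fin n) (Fin n) ℂ) (k l : Fin n) :
    (diagonal v * M * diagonal w) k l = v k * M k l * w l := by
  rw [mul_diagonal, diagonal_mul]

/-- conjugation of a transvection by a diagonal matrix -/
lemma Dg_conj_U (d : Fin n → ℂˣ) (i j : Fin n) (hij : i ≠ j) (c : ℂ) :
    Dg d * U i j hij c * (Dg d)⁻¹ = U i j hij ((d i : ℂ) * c * (((d j)⁻¹ : ℂˣ) : ℂ)) := by
  apply Units.ext
  show diagonal _ * transvection i j c * diagonal _ = transvection i j _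
  ext k l
  rw [diag_conj_entry]
  by_cases hkl : k = l
  · subst hkl
    have hne : ¬(i = k ∧ j = k) := fun ⟨h1, h2⟩ => hij (h1.trans h2.symm)
    simp [transvection, Matrix.single_apply_of_ne _ _ _ _ _ hne, Units.mul_inv]
  · by_cases hk : k = i
    · subst hk
      by_cases hl : l = j
      · subst hl
        simp [transvection, one_apply_ne hij]
      · have hne : ¬(k = k ∧ j = l) := fun ⟨_, h2⟩ => hl h2.symm
        simp [transvection, one_apply_ne hkl, Matrix.single_apply_of_ne _ _ _ _ _ hne]
    · have hne : ¬(i = k ∧ j = l) := fun ⟨h1, _⟩ => hk h1.symm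
      simp [transvection, one_apply_ne hkl, Matrix.single_apply_of_ne _ _ _ _ _ hne]

end Aux1

namespace Aux1

variable {n : ℕ}

lemma Tv (i j : Fin n) (c : ℂ) :
    transvection i j c = 1 + c • Matrix.single i j (1 : ℂ) := by
  rw [transvection, smul_single, smul_eq_mul, mul_one]

lemma comm_matrix (i j k : Fin n) (hij : i ≠ j) (hjk : j ≠ k) (hik : i ≠ k) (a b : ℂ) :
    transvection i j a * transvection j k b * transvection i j (-a) * transvection j k (-b)
      = transvection i k (a * b) := by
  simp only [Tv, add_mul, mul_add, one_mul, mul_one, smul_mul_assoc, mul_smul_comm,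
    Matrix.single_mul_single_same, Matrix.single_mul_single_of_ne _ _ _ _ (Ne.symm hij),
    Matrix.single_mul_single_of_ne _ _ _ _ (Ne.symm hjk), Matrix.single_mul_single_of_ne _ _ _ _ (Ne.symm hik),
    Matrix.single_mul_single_of_ne _ _ _ _ hik, Matrix.single_mul_single_of_ne _ _ _ _ hij, Matrix.single_mul_single_of_ne _ _ _ _ hjk,
    smul_zero, add_zero, zero_add, smul_smul]
  module

lemma braid_matrix (i j : Fin n) (hij : i ≠ j) :
    transvection i j (1:ℂ) * transvection j i (-1:ℂ) * transvection i j (1:ℂ)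
      = transvection j i (-1:ℂ) * transvection i j (1:ℂ) * transvection j i (-1:ℂ) := by
  simp only [Tv, add_mul, mul_add, one_mul, mul_one, smul_mul_assoc, mul_smul_comm,
    Matrix.single_mul_single_same, Matrix.single_mul_single_of_ne _ _ _ _ (Ne.symm hij),
    Matrix.single_mul_single_of_ne _ _ _ _ hij, smul_zero, add_zero, zero_add, smul_smul]
  module

end Aux1

namespace Aux1

variable {n : ℕ}

lemma U_comm (i j k : Fin n) (hij : i ≠ j) (hjk : j ≠ k) (hik : i ≠ k) (a b : ℂ) :
    U i j hij a * U j k hjk b * (U i j hij a)⁻¹ * (U j k hjk b)⁻¹ = U i k hik (a * b) := by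
  rw [U_inv, U_inv]
  exact Units.ext (comm_matrix i j k hij hjk hik a b)

lemma U_braid (i j : Fin n) (hij : i ≠ j) :
    U i j hij 1 * U j i hij.symm (-1) * U i j hij 1
      = U j i hij.symm (-1) * U i j hij 1 * U j i hij.symm (-1) :=
  Units.ext (braid_matrix i j hij)

lemma transvection_entry_same (i j : Fin n) (hij : i ≠ j) (c : ℂ) :
    transvection i j c i j = c := by
  simp [transvection, one_apply_ne hij]

lemma transvection_entry_diag (i j : Fin n) (hij : i ≠ j) (k : Fin n) (c : ℂ) :
    transvection i j c k k = 1 := by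
  have hne : ¬(i = k ∧ j = k) := fun ⟨h1, h2⟩ => hij (h1.trans h2.symm)
  simp [transvection, one_apply_eq, Matrix.single_apply_of_ne _ _ _ _ _ hne]

lemma triple1 (i j : Fin n) (hij : i ≠ j) (a b c : ℂ) :
    (transvection i j a * transvection j i b * transvection i j c) i j
      = c + a * (1 + b * c) := by
  rw [mul_assoc, transvection_mul_apply_same]
  rw [show (transvection j i b * transvection i j c) i j = transvection i j c i j from
    transvection_mul_apply_of_ne j i i j hij b _]
  rw [transvection_mul_apply_same, transvection_entry_same i j hij,
    transvection_entry_diag i j hij j]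

lemma triple2 (i j : Fin n) (hij : i ≠ j) (a b b' : ℂ) :
    (transvection j i b * transvection i j a * transvection j i b') i j = a := by
  rw [mul_assoc, transvection_mul_apply_of_ne j i i j hij, transvection_mul_apply_same]
  rw [show transvection j i b' i j = 0 from by
    simp [transvection, one_apply_ne hij, Matrix.single_apply_of_ne _ _ _ _ _
      (fun h => hij h.2)]]
  rw [transvection_entry_diag j i hij.symm j]
  ring

lemma U_continuous (i j : Fin n) (hij : i ≠ j) :
    Continuous fun c : ℂ => U i j hij c := by
  rw [Units.continuous_iff]
  constructor
  · show Continuous fun c : ℂ => transvection i j c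
    simp only [Tv]
    exact continuous_const.add (continuous_id.smul continuous_const)
  · show Continuous fun c : ℂ => transvection i j (-c)
    simp only [Tv]
    exact continuous_const.add (continuous_id.neg.smul continuous_const)

lemma const_of_punctured {f : ℂ → ℂ} {L C : ℂ} (hf : Continuous f) (h0 : f 0 = L)
    (hC : ∀ α : ℂ, α ≠ 0 → f α = C) : C = L := by
  have h1 : Filter.Tendsto f (nhdsWithin (0:ℂ) {(0:ℂ)}ᶜ) (nhds L) :=
    h0 ▸ (hf.tendsto 0).mono_left nhdsWithin_le_nhds
  have h2 : Filter.Tendsto f (nhdsWithin (0:ℂ) {(0:ℂ)}ᶜ) (nhds C) := by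
    apply Filter.Tendsto.congr' _ tendsto_const_nhds
    filter_upwards [self_mem_nhdsWithin] with a ha using (hC a ha).symm
  exact tendsto_nhds_unique h2 h1

end Aux1

namespace Aux1

variable {n : ℕ}

lemma key (Φ : GL (Fin n) ℂ ≃* GL (Fin n) ℂ) (hΦ : Continuous (⇑Φ))
    (hfix : ∀ h : GL (Fin n) ℂ, (h : Matrix (Fin n) (Fin n) ℂ).IsDiag → Φ h = h)
    (i j : Fin n) (hij : i ≠ j) :
    ∃ μ : ℂ, μ ≠ 0 ∧ ∀ c : ℂ, Φ (U i j hij c) = U i j hij (μ * c) := by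
  classical
  set Gm : ℂ → Matrix (Fin n) (Fin n) ℂ := fun c => (Φ (U i j hij c) : Matrix (Fin n) (Fin n) ℂ)
    with hGmdef
  have hGcont : Continuous Gm := (Units.continuous_val.comp hΦ).comp (U_continuous i j hij)
  have hG0 : Gm 0 = 1 := by simp [hGmdef]
  set X : Matrix (Fin n) (Fin n) ℂ := Gm 1 with hXdef
  -- the two families of diagonal conjugations
  set sI : ℂˣ → Fin n → ℂˣ := fun α k => if k = i then α else 1 with hsI
  set sJ : ℂˣ → Fin n → ℂˣ := fun α k => if k = j then α else 1 with hsJ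
  have conjI : ∀ (α : ℂˣ) (c : ℂ),
      Dg (sI α) * U i j hij c * (Dg (sI α))⁻¹ = U i j hij ((α : ℂ) * c) := by
    intro α c
    rw [Dg_conj_U]
    congr 1
    simp [hsI, Ne.symm hij]
  have conjJ : ∀ (α : ℂˣ) (c : ℂ),
      Dg (sJ α) * U i j hij c * (Dg (sJ α))⁻¹ = U i j hij (((α : ℂ))⁻¹ * c) := by
    intro α c
    rw [Dg_conj_U]
    congr 1
    simp [hsJ, hij, mul_comm]
  have equivI : ∀ (α : ℂˣ) (c : ℂ),
      Φ (U i j hij ((α : ℂ) * c)) = Dg (sI α) * Φ (U i j hij c) * (Dg (sI α))⁻¹ := by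
    intro α c
    rw [← conjI α c, _root_.map_mul, _root_.map_mul, map_inv, hfix _ (Dg_isDiag _)]
  have equivJ : ∀ (α : ℂˣ) (c : ℂ),
      Φ (U i j hij (((α : ℂ))⁻¹ * c)) = Dg (sJ α) * Φ (U i j hij c) * (Dg (sJ α))⁻¹ := by
    intro α c
    rw [← conjJ α c, _root_.map_mul, _root_.map_mul, map_inv, hfix _ (Dg_isDiag _)]
  have hentryI : ∀ (α : ℂˣ) (k l : Fin n),
      Gm (α : ℂ) k l = (sI α k : ℂ) * X k l * (((sI α l)⁻¹ : ℂˣ) : ℂ) := by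
    intro α k l
    have h := congrArg Units.val (equivI α 1)
    rw [mul_one] at h
    have h2 : Gm (α : ℂ) = (Dg (sI α) : Matrix (Fin n) (Fin n) ℂ) * X *
        (((Dg (sI α))⁻¹ : GL (Fin n) ℂ) : Matrix (Fin n) (Fin n) ℂ) := h
    rw [h2, Dg_val, Dg_inv_val, diag_conj_entry]
  have hentryJ : ∀ (α : ℂˣ) (k l : Fin n),
      Gm (((α : ℂ))⁻¹) k l = (sJ α k : ℂ) * X k l * (((sJ α l)⁻¹ : ℂˣ) : ℂ) := by
    intro α k l
    have h := congrArg Units.val (equivJ α 1)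
    rw [mul_one] at h
    have h2 : Gm (((α : ℂ))⁻¹) = (Dg (sJ α) : Matrix (Fin n) (Fin n) ℂ) * X *
        (((Dg (sJ α))⁻¹ : GL (Fin n) ℂ) : Matrix (Fin n) (Fin n) ℂ) := h
    rw [h2, Dg_val, Dg_inv_val, diag_conj_entry]
  have centry : ∀ k l : Fin n, Continuous fun c : ℂ => Gm c k l := by
    intro k l
    exact hGcont.matrix_elem k l
  -- entry computations
  have hXii : X i i = 1 := by
    have := const_of_punctured (f := fun c : ℂ => Gm c i i) (L := (1:ℂ)) (C := X i i)
      (centry i i) (by show Gm 0 i i = 1; rw [hG0, one_apply_eq]) ?_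
    · exact this
    intro α hα
    show Gm α i i = X i i
    have h := hentryI (Units.mk0 α hα) i i
    simp only [hsI, if_pos rfl, Units.val_mk0, Units.val_inv_eq_inv_val] at h
    rw [h]
    field_simp
  have hcol : ∀ k : Fin n, k ≠ i → X k i = 0 := by
    intro k hk
    have := const_of_punctured (f := fun c : ℂ => c * Gm c k i) (L := (0:ℂ)) (C := X k i)
      (continuous_id.mul (centry k i)) (by show (0:ℂ) * Gm 0 k i = 0; ring) ?_
    · exact this
    intro α hα
    show α * Gm α k i = X k i
    have h := hentryI (Units.mk0 α hα) k i
    simp only [hsI, if_pos rfl, if_neg hk, Units.val_mk0, Units.val_inv_eq_inv_val,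
      Units.val_one] at h
    rw [h]
    field_simp
  have hother : ∀ k l : Fin n, k ≠ i → l ≠ i → X k l = (1 : Matrix (Fin n) (Fin n) ℂ) k l := by
    intro k l hk hl
    have := const_of_punctured (f := fun c : ℂ => Gm c k l)
      (L := (1 : Matrix (Fin n) (Fin n) ℂ) k l) (C := X k l)
      (centry k l) (by show Gm 0 k l = _; rw [hG0]) ?_
    · exact this
    intro α hα
    show Gm α k l = X k l
    have h := hentryI (Units.mk0 α hα) k l
    simp only [hsI, if_neg hk, if_neg hl, Units.val_mk0, Units.val_one, inv_one] at h
    simpa using h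
  have hrow : ∀ l : Fin n, l ≠ i → l ≠ j → X i l = 0 := by
    intro l hl hlj
    have := const_of_punctured (f := fun c : ℂ => Gm c i l) (L := (0:ℂ)) (C := X i l)
      (centry i l) (by show Gm 0 i l = 0; rw [hG0, one_apply_ne (Ne.symm hl)]) ?_
    · exact this
    intro α hα
    show Gm α i l = X i l
    have h := hentryJ ((Units.mk0 α hα)⁻¹) i l
    simp only [hsJ, if_neg hij, if_neg hlj, Units.val_inv_eq_inv_val, Units.val_mk0,
      Units.val_one, inv_inv, inv_one] at h
    simpa using h
  set μ : ℂ := X i j with hμdef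
  have hX : X = transvection i j μ := by
    ext k l
    by_cases hk : k = i
    · rw [hk]
      by_cases hl : l = j
      · rw [hl, transvection_entry_same i j hij]
      · by_cases hli : l = i
        · rw [hli, hXii, transvection_entry_diag i j hij]
        · rw [hrow l hli hl]
          simp [transvection, one_apply_ne (Ne.symm hli),
            Matrix.single_apply_of_ne _ _ _ _ _ (fun h => hl h.2.symm)]
    · by_cases hl : l = i
      · rw [hl, hcol k hk]
        simp [transvection, one_apply_ne hk,
          Matrix.single_apply_of_ne _ _ _ _ _ (fun h => hk h.1.symm)]
      · rw [hother k l hk hl]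
        simp [transvection, Matrix.single_apply_of_ne _ _ _ _ _ (fun h => hk h.1.symm)]
  have hμ : μ ≠ 0 := by
    intro h0
    have hX1 : X = 1 := by rw [hX, h0, transvection_zero]
    have hU1 : Φ (U i j hij 1) = 1 := Units.ext (by rw [show (Φ (U i j hij 1) : Matrix (Fin n) (Fin n) ℂ) = X from rfl, hX1]; rfl)
    have : U i j hij 1 = 1 := by
      apply Φ.injective
      rw [hU1, _root_.map_one]
    have h10 : (1 : ℂ) = 0 := by
      have := U_inj (hij := hij) (c := 1) (d := 0) (by rw [this, U_zero])
      exact this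
    exact one_ne_zero h10
  refine ⟨μ, hμ, ?_⟩
  have hPhi1 : Φ (U i j hij 1) = U i j hij μ := Units.ext (by
    show Gm 1 = transvection i j μ
    rw [← hXdef, hX])
  intro c
  rcases eq_or_ne c 0 with rfl | hc
  · rw [mul_zero, U_zero, _root_.map_one]
  · have h := equivI (Units.mk0 c hc) 1
    rw [mul_one, hPhi1, conjI] at h
    simpa [mul_comm] using h

end Aux1

/-- Every continuous group automorphism `Φ` of `GL(n,ℂ)` (continuous with
continuous inverse) that fixes every invertible diagonal matrix is conjugation by an
invertible diagonal matrix. -/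
theorem continuous_aut_fixing_torus_is_inner_by_diagonal (n : ℕ) (hn : 1 ≤ n)
    (Φ : GL (Fin n) ℂ ≃* GL (Fin n) ℂ)
    (hΦ : Continuous (⇑Φ)) (hΦsymm : Continuous (⇑Φ.symm))
    (hfix : ∀ h : GL (Fin n) ℂ, (h : Matrix (Fin n) (Fin n) ℂ).IsDiag → Φ h = h) :
    ∃ t : GL (Fin n) ℂ, (t : Matrix (Fin n) (Fin n) ℂ).IsDiag ∧
      ∀ g : GL (Fin n) ℂ, Φ g = t * g * t⁻¹ := by
  classical
  open Aux1 in
  obtain ⟨lam, hlam0, hlamU⟩ :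
      ∃ lam : ∀ i j : Fin n, i ≠ j → ℂ, (∀ i j hij, lam i j hij ≠ 0) ∧
        ∀ i j hij c, Φ (Aux1.U i j hij c) = Aux1.U i j hij (lam i j hij * c) := by
    choose lam h1 h2 using fun i j hij => Aux1.key Φ hΦ hfix i j hij
    exact ⟨lam, h1, h2⟩
  -- multiplicative relation
  have hmulrel : ∀ (i j k : Fin n) (hij : i ≠ j) (hjk : j ≠ k) (hik : i ≠ k),
      lam i k hik = lam i j hij * lam j k hjk := by
    intro i j k hij hjk hik
    have h := congrArg Φ (Aux1.U_comm i j k hij hjk hik 1 1)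
    rw [_root_.map_mul, _root_.map_mul, _root_.map_mul, map_inv, map_inv,
      hlamU i j hij, hlamU j k hjk, Aux1.U_comm i j k hij hjk hik,
      hlamU i k hik] at h
    simp only [mul_one, one_mul] at h
    exact (Aux1.U_inj h).symm
  -- inverse relation, via the braid relation
  have hinvrel : ∀ (i j : Fin n) (hij : i ≠ j), lam i j hij * lam j i hij.symm = 1 := by
    intro i j hij
    set a : ℂ := lam i j hij with ha
    set b : ℂ := lam j i hij.symm with hb
    have h := congrArg Φ (Aux1.U_braid i j hij)
    rw [_root_.map_mul, _root_.map_mul, _root_.map_mul, _root_.map_mul,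
      hlamU i j hij, hlamU j i hij.symm, mul_one, ← ha, ← hb] at h
    have hv := congrArg (fun g : GL (Fin n) ℂ => (g : Matrix (Fin n) (Fin n) ℂ) i j) h
    simp only [Units.val_mul, Aux1.U_val] at hv
    rw [Aux1.triple1 i j hij a (b * -1) a, Aux1.triple2 i j hij a (b*-1) (b*-1)] at hv
    have hfac : a * ((b * -1) * a + 1) = 0 := by linear_combination hv
    have h2 : (b * -1) * a + 1 = 0 := by
      rcases mul_eq_zero.mp hfac with h | h
      · exact absurd h (hlam0 i j hij)
      · exact h
    linear_combination -h2
  -- the diagonal element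
  obtain ⟨z, -⟩ : ∃ z : Fin n, True := ⟨⟨0, hn⟩, trivial⟩
  set tf : Fin n → ℂˣ := fun k =>
    if h : k = z then 1 else Units.mk0 (lam k z h) (hlam0 k z h) with htf
  have hlt : ∀ (i j : Fin n) (hij : i ≠ j),
      lam i j hij = (tf i : ℂ) * ((tf j : ℂ))⁻¹ := by
    intro i j hij
    by_cases hjz : j = z
    · subst hjz
      simp only [htf, dif_pos rfl, dif_neg hij, Units.val_one, inv_one, mul_one, Units.val_mk0]
    · by_cases hiz : i = z
      · subst hiz
        have h := hinvrel i j hij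
        simp only [htf, dif_pos rfl, dif_neg hjz, Units.val_one, one_mul, Units.val_mk0,
          Units.val_inv_eq_inv_val]
        exact eq_inv_of_mul_eq_one_left h
      · have h := hmulrel i z j hiz (fun hh => hjz hh.symm) hij
        have h2 := hinvrel z j (fun hh => hjz hh.symm)
        simp only [htf, dif_neg hiz, dif_neg hjz, Units.val_mk0, Units.val_inv_eq_inv_val]
        exact h.trans (by rw [eq_inv_of_mul_eq_one_left h2])
  set T : GL (Fin n) ℂ := Aux1.Dg tf with hT
  have hTU : ∀ (i j : Fin n) (hij : i ≠ j) (c : ℂ),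
      T * Aux1.U i j hij c * T⁻¹ = Aux1.U i j hij (lam i j hij * c) := by
    intro i j hij c
    rw [hT, Aux1.Dg_conj_U]
    congr 1
    rw [hlt i j hij, Units.val_inv_eq_inv_val]
    ring
  refine ⟨T, Aux1.Dg_isDiag tf, ?_⟩
  intro g
  have hdet : ((g : Matrix (Fin n) (Fin n) ℂ)).det ≠ 0 := by
    have hu : IsUnit (g : Matrix (Fin n) (Fin n) ℂ) := ⟨g, rfl⟩
    exact ((Matrix.isUnit_iff_isUnit_det _).mp hu).ne_zero
  have main := Matrix.diagonal_transvection_induction_of_det_ne_zero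
    (P := fun M => ∀ u : GL (Fin n) ℂ, (u : Matrix (Fin n) (Fin n) ℂ) = M → Φ u = T * u * T⁻¹)
    (g : Matrix (Fin n) (Fin n) ℂ) hdet ?_ ?_ ?_
  · exact main g rfl
  · -- diagonal case
    intro D hD u hu
    have hdiag : (u : Matrix (Fin n) (Fin n) ℂ).IsDiag := by
      rw [hu]; exact Matrix.isDiag_diagonal D
    rw [hfix u hdiag]
    have hc : T * u = u * T := by
      apply Units.ext
      show (T : Matrix (Fin n) (Fin n) ℂ) * u = (u : Matrix (Fin n) (Fin n) ℂ) * T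
      rw [hu, hT, Aux1.Dg_val, Matrix.diagonal_mul_diagonal, Matrix.diagonal_mul_diagonal]
      ext k l
      rcases eq_or_ne k l with rfl | hkl
      · simp [mul_comm]
      · simp [Matrix.diagonal_apply_ne _ hkl]
    rw [hc, mul_assoc, mul_inv_cancel, mul_one]
  · -- transvection case
    rintro ⟨ti, tj, thij, tc⟩ u hu
    have hu2 : u = Aux1.U ti tj thij tc := by
      apply Units.ext
      rw [hu, Matrix.TransvectionStruct.toMatrix_mk]
      rfl
    rw [hu2, hlamU, hTU]
  · -- multiplicative case
    intro A B hA hB PA PB u hu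
    have hAu : IsUnit A.det := isUnit_iff_ne_zero.mpr hA
    have hBu : IsUnit B.det := isUnit_iff_ne_zero.mpr hB
    have hu2 : u = A.nonsingInvUnit hAu * B.nonsingInvUnit hBu := by
      apply Units.ext
      rw [hu]
      rfl
    rw [hu2, _root_.map_mul, PA (A.nonsingInvUnit hAu) rfl, PB (B.nonsingInvUnit hBu) rfl]
    group
end

section
/- If C is a continuous group automorphism of GL(n,ℂ) (continuous with continuous inverse) satisfying C(h) = h⁻¹ for every invertible diagonal matrix h, then C ∘ C is the identity automorphism. -/
open Matrix

namespace ChevAux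

variable {n : ℕ}

def Tu (i j : Fin n) (hij : i ≠ j) (c : ℂ) : GL (Fin n) ℂ :=
  ⟨transvection i j c, transvection i j (-c),
   by rw [transvection_mul_transvection_same _ _ hij, add_neg_cancel, transvection_zero],
   by rw [transvection_mul_transvection_same _ _ hij, neg_add_cancel, transvection_zero]⟩

@[simp] lemma Tu_coe (i j : Fin n) (hij : i ≠ j) (c : ℂ) :
    (Tu i j hij c : Matrix (Fin n) (Fin n) ℂ) = transvection i j c := rfl

def Du (t : Fin n → ℂˣ) : GL (Fin n) ℂ :=
  ⟨diagonal fun k => (t k : ℂ), diagonal fun k => ((t k)⁻¹ : ℂˣ),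
   by rw [diagonal_mul_diagonal]; convert diagonal_one ; simp,
   by rw [diagonal_mul_diagonal]; convert diagonal_one ; simp⟩

@[simp] lemma Du_coe (t : Fin n → ℂˣ) :
    (Du t : Matrix (Fin n) (Fin n) ℂ) = diagonal fun k => (t k : ℂ) := rfl


lemma Tu_mul (i j : Fin n) (hij : i ≠ j) (c d : ℂ) :
    Tu i j hij c * Tu i j hij d = Tu i j hij (c + d) := by
  ext1
  simp [transvection_mul_transvection_same _ _ hij]

lemma Tu_zero (i j : Fin n) (hij : i ≠ j) : Tu i j hij 0 = 1 := by
  ext1; simp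

@[simp] lemma Du_inv_coe (t : Fin n → ℂˣ) :
    ((Du t)⁻¹ : GL (Fin n) ℂ) = (diagonal (fun k => ((t k)⁻¹ : ℂˣ)) : Matrix (Fin n) (Fin n) ℂ) := rfl

lemma transvection_apply' (i j : Fin n) (hij : i ≠ j) (c : ℂ) (a b : Fin n) :
    transvection i j c a b = (if a = b then 1 else 0) + (if a = i ∧ b = j then c else 0) := by
  simp [transvection, Matrix.add_apply, Matrix.one_apply, single, and_comm]
  congr 1
  simp [eq_comm]

lemma Du_mul_Tu (t : Fin n → ℂˣ) (i j : Fin n) (hij : i ≠ j) (c : ℂ) :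
    Du t * Tu i j hij c = Tu i j hij ((t i : ℂ) * c * ((t j : ℂ))⁻¹) * Du t := by
  ext1
  show (Du t : Matrix (Fin n) (Fin n) ℂ) * (Tu i j hij c : Matrix (Fin n) (Fin n) ℂ) = _
  rw [Du_coe, Tu_coe]
  show _ = (transvection i j ((t i : ℂ) * c * ((t j : ℂ))⁻¹)) * diagonal fun k => (t k : ℂ)
  ext a b
  rw [diagonal_mul, mul_diagonal, transvection_apply' i j hij, transvection_apply' i j hij]
  rcases eq_or_ne a b with rfl | hab
  · have : ¬ (a = i ∧ a = j) := by rintro ⟨rfl, rfl⟩; exact hij rfl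
    simp [this]
  · simp only [hab, if_neg hab, if_neg (by exact hab)]
    by_cases h : a = i ∧ b = j
    · obtain ⟨rfl, rfl⟩ := h
      simp only [and_self, if_pos, zero_add, if_false, zero_mul]
      field_simp
    · simp [h]


section
variable (Cm : GL (Fin n) ℂ ≃* GL (Fin n) ℂ)
  (hinv : ∀ h : GL (Fin n) ℂ, (h : Matrix (Fin n) (Fin n) ℂ).IsDiag → Cm h = h⁻¹)
  {i j : Fin n} (hij : i ≠ j)

include hinv in
lemma C_Du (t : Fin n → ℂˣ) : Cm (Du t) = (Du t)⁻¹ :=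
  hinv _ (by rw [Du_coe]; exact isDiag_diagonal _)

include hinv in
/-- fundamental entry relation -/
lemma entry_rel (t : Fin n → ℂˣ) (i j : Fin n) (hij : i ≠ j) (c : ℂ) (a b : Fin n) :
    (t a : ℂ) * (Cm (Tu i j hij ((t i : ℂ) * c * ((t j : ℂ))⁻¹)) : Matrix (Fin n) (Fin n) ℂ) a b
      = (Cm (Tu i j hij c) : Matrix (Fin n) (Fin n) ℂ) a b * (t b : ℂ) := by
  have h0 := Du_mul_Tu t i j hij c
  have h1 : Cm (Du t) * Cm (Tu i j hij c)
      = Cm (Tu i j hij ((t i : ℂ) * c * ((t j : ℂ))⁻¹)) * Cm (Du t) := by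
    rw [← _root_.map_mul, ← _root_.map_mul, h0]
  rw [C_Du Cm hinv] at h1
  have h2 : Du t * Cm (Tu i j hij ((t i : ℂ) * c * ((t j : ℂ))⁻¹))
      = Cm (Tu i j hij c) * Du t := by
    rw [inv_mul_eq_iff_eq_mul] at h1
    rw [h1]
    simp [mul_assoc]
  have h3 := congrArg (fun X : GL (Fin n) ℂ => (X : Matrix (Fin n) (Fin n) ℂ) a b) h2
  simpa [Units.val_mul, diagonal_mul, mul_diagonal] using h3


include hinv in
lemma vanish (c : ℂ) (a b : Fin n) (hab : a ≠ b) (h1 : ¬(a = i ∧ b = j))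
    (h2 : ¬(a = j ∧ b = i)) :
    (Cm (Tu i j hij c) : Matrix (Fin n) (Fin n) ℂ) a b = 0 := by
  classical
  set m : Fin n := if a = i ∨ a = j then b else a with hm
  have hmi : m ≠ i := by
    rw [hm]; split
    · rename_i h
      rcases h with rfl | rfl
      · exact fun hbi => hab hbi.symm
      · intro hbi; exact h2 ⟨rfl, hbi⟩
    · rename_i h
      push_neg at h
      exact h.1
  have hmj : m ≠ j := by
    rw [hm]; split
    · rename_i h
      rcases h with rfl | rfl
      · intro hbj; exact h1 ⟨rfl, hbj⟩
      · exact fun hbj => hab hbj.symm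
    · rename_i h
      push_neg at h
      exact h.2
  have hm_cases : (a = m ∧ b ≠ m) ∨ (a ≠ m ∧ b = m) := by
    rw [hm]; split
    · rename_i h
      exact Or.inr ⟨fun ha => hab ha, rfl⟩
    · rename_i h
      exact Or.inl ⟨rfl, fun hb => hab hb.symm⟩
  set t : Fin n → ℂˣ := fun x => if x = m then Units.mk0 2 two_ne_zero else 1 with ht
  have hti : t i = 1 := by rw [ht]; simp only [if_neg (fun h : i = m => hmi h.symm)]
  have htj : t j = 1 := by rw [ht]; simp only [if_neg (fun h : j = m => hmj h.symm)]
  have harg : (t i : ℂ) * c * ((t j : ℂ))⁻¹ = c := by rw [hti, htj]; simp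
  have hrel := entry_rel Cm hinv t i j hij c a b
  rw [harg] at hrel
  set x := (Cm (Tu i j hij c) : Matrix (Fin n) (Fin n) ℂ) a b with hx
  have hfac : x * ((t b : ℂ) - (t a : ℂ)) = 0 := by linear_combination -hrel
  rcases mul_eq_zero.mp hfac with h | h
  · exact h
  · exfalso
    rcases hm_cases with ⟨ham, hbm⟩ | ⟨ham, hbm⟩
    · rw [ht] at h
      simp only [if_pos ham, if_neg hbm] at h
      norm_num at h
    · rw [ht] at h
      simp only [if_pos hbm, if_neg ham] at h
      norm_num at h

include hinv in
lemma scale (d : ℂˣ) (c : ℂ) (a b : Fin n) :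
    (if a = i then (d : ℂ) else 1) *
        (Cm (Tu i j hij ((d : ℂ) * c)) : Matrix (Fin n) (Fin n) ℂ) a b
      = (Cm (Tu i j hij c) : Matrix (Fin n) (Fin n) ℂ) a b * (if b = i then (d : ℂ) else 1) := by
  classical
  set t : Fin n → ℂˣ := fun x => if x = i then d else 1 with ht
  have hti : t i = d := by rw [ht]; simp
  have htj : t j = 1 := by rw [ht]; simp [hij.symm]
  have harg : (t i : ℂ) * c * ((t j : ℂ))⁻¹ = (d : ℂ) * c := by rw [hti, htj]; simp
  have hrel := entry_rel Cm hinv t i j hij c a b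
  rw [harg] at hrel
  have hta : (t a : ℂ) = if a = i then (d : ℂ) else 1 := by
    rw [ht]; split <;> simp_all
  have htb : (t b : ℂ) = if b = i then (d : ℂ) else 1 := by
    rw [ht]; split <;> simp_all
  rw [hta, htb] at hrel
  exact hrel


lemma sum_two {f : Fin n → ℂ} {i j : Fin n} (hij : i ≠ j)
    (h : ∀ m, m ≠ i → m ≠ j → f m = 0) : ∑ m, f m = f i + f j := by
  classical
  have hsub : ∑ x ∈ ({i, j} : Finset (Fin n)), f x = ∑ x, f x := by
    apply Finset.sum_subset (Finset.subset_univ _)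
    intro x _ hx
    simp only [Finset.mem_insert, Finset.mem_singleton] at hx
    push_neg at hx
    exact h x hx.1 hx.2
  rw [← hsub, Finset.sum_pair hij]

include hinv in
lemma rowi (X : Matrix (Fin n) (Fin n) ℂ) (c : ℂ) (b' : Fin n) :
    ((Cm (Tu i j hij c) : Matrix (Fin n) (Fin n) ℂ) * X) i b'
      = (Cm (Tu i j hij c) : Matrix (Fin n) (Fin n) ℂ) i i * X i b'
        + (Cm (Tu i j hij c) : Matrix (Fin n) (Fin n) ℂ) i j * X j b' := by
  rw [mul_apply]
  exact sum_two hij fun m hmi hmj => by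
    rw [vanish Cm hinv hij c i m (Ne.symm hmi) (fun h => hmj h.2) (fun h => hij h.1), zero_mul]

include hinv in
lemma rowj (X : Matrix (Fin n) (Fin n) ℂ) (c : ℂ) (b' : Fin n) :
    ((Cm (Tu i j hij c) : Matrix (Fin n) (Fin n) ℂ) * X) j b'
      = (Cm (Tu i j hij c) : Matrix (Fin n) (Fin n) ℂ) j i * X i b'
        + (Cm (Tu i j hij c) : Matrix (Fin n) (Fin n) ℂ) j j * X j b' := by
  rw [mul_apply]
  exact sum_two hij fun m hmi hmj => by
    rw [vanish Cm hinv hij c j m (Ne.symm hmj) (fun h => hij h.1.symm) (fun h => hmi h.2),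
      zero_mul]

include hinv in
lemma rowa (X : Matrix (Fin n) (Fin n) ℂ) (c : ℂ) (a b' : Fin n) (hai : a ≠ i) (haj : a ≠ j) :
    ((Cm (Tu i j hij c) : Matrix (Fin n) (Fin n) ℂ) * X) a b'
      = (Cm (Tu i j hij c) : Matrix (Fin n) (Fin n) ℂ) a a * X a b' := by
  rw [mul_apply]
  apply Finset.sum_eq_single
  · intro m _ hma
    rw [vanish Cm hinv hij c a m (Ne.symm hma) (fun h => hai h.1) (fun h => haj h.1), zero_mul]
  · intro h; exact absurd (Finset.mem_univ a) h

include hinv in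
lemma key (c : ℂ) :
    Cm (Tu i j hij c)
      = Tu j i hij.symm ((Cm (Tu i j hij 1) : Matrix (Fin n) (Fin n) ℂ) j i * c) := by
  classical
  -- products
  have E : ∀ c c' : ℂ, (Cm (Tu i j hij c) : Matrix (Fin n) (Fin n) ℂ)
      * (Cm (Tu i j hij c') : Matrix (Fin n) (Fin n) ℂ)
      = (Cm (Tu i j hij (c + c')) : Matrix (Fin n) (Fin n) ℂ) := by
    intro c c'
    have : Cm (Tu i j hij c) * Cm (Tu i j hij c') = Cm (Tu i j hij (c + c')) := by
      rw [← _root_.map_mul, Tu_mul]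
    exact congrArg Units.val this
  -- diagonal entries are constant
  have hdiag : ∀ (c : ℂ), c ≠ 0 → ∀ a, (Cm (Tu i j hij c) : Matrix (Fin n) (Fin n) ℂ) a a
      = (Cm (Tu i j hij 1) : Matrix (Fin n) (Fin n) ℂ) a a := by
    intro c hc a
    have hs := scale Cm hinv hij (Units.mk0 c hc) 1 a a
    rw [Units.val_mk0, mul_one] at hs
    by_cases ha : a = i
    · rw [if_pos ha] at hs
      exact mul_left_cancel₀ hc (by linear_combination hs)
    · rw [if_neg ha] at hs
      simpa using hs
  -- (i,j) entries
  have hQc : ∀ (c : ℂ), c ≠ 0 → (Cm (Tu i j hij c) : Matrix (Fin n) (Fin n) ℂ) i j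
      = (Cm (Tu i j hij 1) : Matrix (Fin n) (Fin n) ℂ) i j * c⁻¹ := by
    intro c hc
    have hs := scale Cm hinv hij (Units.mk0 c hc) 1 i j
    rw [Units.val_mk0, mul_one, if_pos rfl, if_neg hij.symm, mul_one] at hs
    field_simp
    linear_combination hs
  -- (j,i) entries
  have hRc : ∀ (c : ℂ), c ≠ 0 → (Cm (Tu i j hij c) : Matrix (Fin n) (Fin n) ℂ) j i
      = (Cm (Tu i j hij 1) : Matrix (Fin n) (Fin n) ℂ) j i * c := by
    intro c hc
    have hs := scale Cm hinv hij (Units.mk0 c hc) 1 j i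
    rw [Units.val_mk0, mul_one, if_neg hij.symm, if_pos rfl, one_mul] at hs
    exact hs
  obtain ⟨P, hP⟩ : ∃ x, (Cm (Tu i j hij 1) : Matrix (Fin n) (Fin n) ℂ) i i = x := ⟨_, rfl⟩
  obtain ⟨S, hS⟩ : ∃ x, (Cm (Tu i j hij 1) : Matrix (Fin n) (Fin n) ℂ) j j = x := ⟨_, rfl⟩
  obtain ⟨Q, hQ⟩ : ∃ x, (Cm (Tu i j hij 1) : Matrix (Fin n) (Fin n) ℂ) i j = x := ⟨_, rfl⟩
  obtain ⟨R, hR⟩ : ∃ x, (Cm (Tu i j hij 1) : Matrix (Fin n) (Fin n) ℂ) j i = x := ⟨_, rfl⟩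
  -- entry equations for products
  have Eii : ∀ c c' : ℂ, c ≠ 0 → c' ≠ 0 → c + c' ≠ 0 →
      P * P + (Q * c⁻¹) * (R * c') = P := by
    intro c c' hc hc' hcc
    have h := congrFun (congrFun (E c c') i) i
    rw [rowi Cm hinv hij, hdiag c hc i, hdiag c' hc' i, hdiag (c + c') hcc i, hQc c hc,
      hRc c' hc', hP, hQ, hR] at h
    exact h
  have Eij : ∀ c c' : ℂ, c ≠ 0 → c' ≠ 0 → c + c' ≠ 0 →
      P * (Q * c'⁻¹) + (Q * c⁻¹) * S = Q * (c + c')⁻¹ := by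
    intro c c' hc hc' hcc
    have h := congrFun (congrFun (E c c') i) j
    rw [rowi Cm hinv hij, hdiag c hc i, hdiag c' hc' j, hQc c hc, hQc (c + c') hcc,
      hQc c' hc', hP, hQ, hS] at h
    exact h
  have Ejj : ∀ c c' : ℂ, c ≠ 0 → c' ≠ 0 → c + c' ≠ 0 →
      (R * c) * (Q * c'⁻¹) + S * S = S := by
    intro c c' hc hc' hcc
    have h := congrFun (congrFun (E c c') j) j
    rw [rowj Cm hinv hij, hdiag c hc j, hdiag c' hc' j, hdiag (c + c') hcc j,
      hQc c' hc', hRc c hc, hS, hQ, hR] at h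
    exact h
  have hQR : Q * R = 0 := by
    have e1 := Eii 1 1 one_ne_zero one_ne_zero (by norm_num)
    have e2 := Eii 1 2 one_ne_zero two_ne_zero (by norm_num)
    linear_combination e2 - e1
  have hPP : P * P = P := by
    have e1 := Eii 1 1 one_ne_zero one_ne_zero (by norm_num)
    linear_combination e1 - hQR
  have hQ0 : Q = 0 := by
    have f1 := Eij 1 1 one_ne_zero one_ne_zero (by norm_num)
    have f2 := Eij 1 2 one_ne_zero two_ne_zero (by norm_num)
    have f3 := Eij 2 1 two_ne_zero one_ne_zero (by norm_num)
    have h2 : (2 : ℂ) ≠ 0 := two_ne_zero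
    have h3 : (3 : ℂ) ≠ 0 := by norm_num
    field_simp at f1 f2 f3
    linear_combination (-9 : ℂ) * f1 + 2 * f2 + 2 * f3
  have hSS : S * S = S := by
    have g1 := Ejj 1 1 one_ne_zero one_ne_zero (by norm_num)
    linear_combination g1 - hQR
  -- invertibility
  obtain ⟨V, hV⟩ : ∃ X, ((Cm (Tu i j hij 1))⁻¹ : GL (Fin n) ℂ)
      = (X : Matrix (Fin n) (Fin n) ℂ) := ⟨_, rfl⟩
  have hUV : (Cm (Tu i j hij 1) : Matrix (Fin n) (Fin n) ℂ) * V = 1 := by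
    rw [← hV]
    exact Units.mul_inv _
  have hP1 : P = 1 := by
    have h := congrFun (congrFun hUV i) i
    rw [rowi Cm hinv hij, hP, hQ, hQ0, zero_mul, add_zero, one_apply_eq] at h
    have hPne : P ≠ 0 := left_ne_zero_of_mul_eq_one h
    exact mul_left_cancel₀ hPne (by rw [hPP, mul_one])
  have hVij : V i j = 0 := by
    have h := congrFun (congrFun hUV i) j
    rw [rowi Cm hinv hij, hP, hQ, hQ0, zero_mul, add_zero, hP1, one_mul,
      one_apply_ne hij] at h
    exact h
  have hS1 : S = 1 := by
    have h := congrFun (congrFun hUV j) j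
    rw [rowj Cm hinv hij, hS, hR, hVij, mul_zero, zero_add, one_apply_eq] at h
    have hSne : S ≠ 0 := left_ne_zero_of_mul_eq_one h
    exact mul_left_cancel₀ hSne (by rw [hSS, mul_one])
  have hka : ∀ a, a ≠ i → a ≠ j → (Cm (Tu i j hij 1) : Matrix (Fin n) (Fin n) ℂ) a a = 1 := by
    intro a hai haj
    have haa : (Cm (Tu i j hij 1) : Matrix (Fin n) (Fin n) ℂ) a a
        * (Cm (Tu i j hij 1) : Matrix (Fin n) (Fin n) ℂ) a a
        = (Cm (Tu i j hij 1) : Matrix (Fin n) (Fin n) ℂ) a a := by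
      have h := congrFun (congrFun (E 1 1) a) a
      rw [rowa Cm hinv hij _ _ _ _ hai haj, hdiag (1 + 1) (by norm_num) a] at h
      exact h
    have h := congrFun (congrFun hUV a) a
    rw [rowa Cm hinv hij _ _ _ _ hai haj, one_apply_eq] at h
    have hne : (Cm (Tu i j hij 1) : Matrix (Fin n) (Fin n) ℂ) a a ≠ 0 :=
      left_ne_zero_of_mul_eq_one h
    exact mul_left_cancel₀ hne (by rw [haa, mul_one])
  -- conclusion
  rw [hR]
  rcases eq_or_ne c 0 with rfl | hc
  · rw [mul_zero, Tu_zero, Tu_zero, _root_.map_one]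
  · have : (Cm (Tu i j hij c) : Matrix (Fin n) (Fin n) ℂ)
        = (Tu j i hij.symm (R * c) : Matrix (Fin n) (Fin n) ℂ) := by
      rw [Tu_coe]
      ext a b
      rw [transvection_apply' j i hij.symm]
      rcases eq_or_ne a b with rfl | hab
      · have hne : ¬(a = j ∧ a = i) := by rintro ⟨rfl, rfl⟩; exact hij rfl
        rw [if_pos rfl, if_neg hne, add_zero, hdiag c hc a]
        by_cases hai : a = i
        · subst hai; rw [hP, hP1]
        · by_cases haj : a = j
          · subst haj; rw [hS, hS1]
          · exact hka a hai haj
      · rw [if_neg hab, zero_add]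
        by_cases hji : a = j ∧ b = i
        · obtain ⟨rfl, rfl⟩ := hji
          rw [if_pos ⟨rfl, rfl⟩, hRc c hc, hR]
        · rw [if_neg hji]
          by_cases hij' : a = i ∧ b = j
          · obtain ⟨rfl, rfl⟩ := hij'
            rw [hQc c hc, hQ, hQ0, zero_mul]
          · exact vanish Cm hinv hij c a b hab hij' hji
    exact Units.ext this

include hinv in
lemma R2R1 :
    (Cm (Tu j i hij.symm 1) : Matrix (Fin n) (Fin n) ℂ) i j
      * (Cm (Tu i j hij 1) : Matrix (Fin n) (Fin n) ℂ) j i = 1 := by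
  classical
  obtain ⟨R1, hR1⟩ : ∃ x, (Cm (Tu i j hij 1) : Matrix (Fin n) (Fin n) ℂ) j i = x := ⟨_, rfl⟩
  obtain ⟨R2, hR2⟩ : ∃ x, (Cm (Tu j i hij.symm 1) : Matrix (Fin n) (Fin n) ℂ) i j = x := ⟨_, rfl⟩
  rw [hR1, hR2]
  obtain ⟨w, hw⟩ : ∃ w : GL (Fin n) ℂ,
      w = Tu i j hij 1 * Tu j i hij.symm (-1) * Tu i j hij 1 := ⟨_, rfl⟩
  have hT : ∀ (a b : Fin n) (c : ℂ),
      transvection i j c a b = (if a = b then 1 else 0) + (if a = i ∧ b = j then c else 0) :=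
    fun a b c => transvection_apply' i j hij c a b
  have hT' : ∀ (a b : Fin n) (c : ℂ),
      transvection j i c a b = (if a = b then 1 else 0) + (if a = j ∧ b = i then c else 0) :=
    fun a b c => transvection_apply' j i hij.symm c a b
  have hWmat : (w : Matrix (Fin n) (Fin n) ℂ)
      = transvection i j 1 * (transvection j i (-1) * transvection i j 1) := by
    rw [hw, Units.val_mul, Units.val_mul, Tu_coe, Tu_coe, mul_assoc]
  obtain ⟨X, hX⟩ : ∃ X : Matrix (Fin n) (Fin n) ℂ,
      X = transvection j i (-1) * transvection i j 1 := ⟨_, rfl⟩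
  rw [← hX] at hWmat
  have hXii : X i i = 1 := by
    rw [hX, transvection_mul_apply_of_ne _ _ _ _ hij, hT]
    simp [hij]
  have hXji : X j i = -1 := by
    rw [hX, transvection_mul_apply_same, hT, hT]
    simp [hij, hij.symm]
  have hXai : ∀ a, a ≠ i → a ≠ j → X a i = 0 := by
    intro a hai haj
    rw [hX, transvection_mul_apply_of_ne _ _ _ _ haj, hT]
    simp [hai, fun h : a = i ∧ i = j => hij h.2]
  have hXjb : ∀ b, b ≠ i → X j b = 0 := by
    intro b hbi
    rw [hX, transvection_mul_apply_same, hT, hT]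
    by_cases hbj : b = j
    · subst hbj; simp [hij.symm, hij]
    · simp [hbj, hbi, Ne.symm hbi, Ne.symm hbj, hij.symm]
  have hWcol : ∀ a : Fin n, a ≠ j → (w : Matrix (Fin n) (Fin n) ℂ) a i = 0 := by
    intro a haj
    by_cases hai : a = i
    · subst hai
      rw [hWmat, transvection_mul_apply_same, hXii, hXji]
      ring
    · rw [hWmat, transvection_mul_apply_of_ne _ _ _ _ hai, hXai a hai haj]
  have hWrow : ∀ b : Fin n, b ≠ i → (w : Matrix (Fin n) (Fin n) ℂ) j b = 0 := by
    intro b hbi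
    rw [hWmat, transvection_mul_apply_of_ne _ _ _ _ hij.symm, hXjb b hbi]
  -- swap relation
  have hswap : w * Du (fun x => if x = i then Units.mk0 2 two_ne_zero else 1)
      = Du (fun x => if x = j then Units.mk0 2 two_ne_zero else 1) * w := by
    apply Units.ext
    rw [Units.val_mul, Units.val_mul, Du_coe, Du_coe]
    ext a b
    rw [mul_diagonal, diagonal_mul]
    by_cases hb : b = i
    · subst hb
      by_cases ha : a = j
      · subst ha; ring
      · rw [hWcol a ha, zero_mul, mul_zero]
    · by_cases ha : a = j
      · subst ha
        rw [hWrow b hb, zero_mul, mul_zero]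
      · simp only [if_neg hb, if_neg ha, Units.val_one, mul_one, one_mul]
  have hCswap : Cm w * (Du (fun x => if x = i then Units.mk0 2 two_ne_zero else 1))⁻¹
      = (Du (fun x => if x = j then Units.mk0 2 two_ne_zero else 1))⁻¹ * Cm w := by
    have h := congrArg Cm hswap
    rw [_root_.map_mul, _root_.map_mul, C_Du Cm hinv, C_Du Cm hinv] at h
    exact h
  -- matrix of Cm w
  have hk1 : Cm (Tu i j hij 1) = Tu j i hij.symm (R1 * 1) :=
    (key Cm hinv hij 1).trans (by rw [hR1])
  have hk2 : Cm (Tu j i hij.symm (-1)) = Tu i j hij (R2 * (-1)) :=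
    (key Cm hinv hij.symm (-1)).trans (by rw [hR2])
  have hCw : (Cm w : Matrix (Fin n) (Fin n) ℂ)
      = transvection j i (R1 * 1)
        * (transvection i j (R2 * -1) * transvection j i (R1 * 1)) := by
    rw [hw, _root_.map_mul, _root_.map_mul, hk1, hk2, Units.val_mul, Units.val_mul,
      Tu_coe, Tu_coe, mul_assoc]
  have hCwii : (Cm w : Matrix (Fin n) (Fin n) ℂ) i i = 1 - R2 * R1 := by
    rw [hCw, transvection_mul_apply_of_ne _ _ _ _ hij, transvection_mul_apply_same,
      hT', hT']
    simp [hij, hij.symm]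
    ring
  have h := congrArg (fun X : GL (Fin n) ℂ => (X : Matrix (Fin n) (Fin n) ℂ) i i) hCswap
  simp only [Units.val_mul, Du_inv_coe, mul_diagonal, diagonal_mul] at h
  rw [hCwii] at h
  simp only [if_pos rfl, if_neg hij] at h
  norm_num at h
  linear_combination 2 * h

include hinv in
lemma CC_Tu {i j : Fin n} (hij : i ≠ j) (c : ℂ) :
    Cm (Cm (Tu i j hij c)) = Tu i j hij c := by
  rw [key Cm hinv hij c, key Cm hinv hij.symm, ← mul_assoc, R2R1 Cm hinv hij, one_mul]

include hinv in
theorem CC_id (g : GL (Fin n) ℂ) : Cm (Cm g) = g := by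
  have hdet : ((g : Matrix (Fin n) (Fin n) ℂ)).det ≠ 0 := by
    have : IsUnit (g : Matrix (Fin n) (Fin n) ℂ) := Units.isUnit g
    exact ((Matrix.isUnit_iff_isUnit_det _).mp this).ne_zero
  have main := diagonal_transvection_induction_of_det_ne_zero
    (fun N => ∀ g' : GL (Fin n) ℂ, (g' : Matrix (Fin n) (Fin n) ℂ) = N → Cm (Cm g') = g')
    (g : Matrix (Fin n) (Fin n) ℂ) hdet
    (by
      intro D hD g' hg'
      have h1 : (g' : Matrix (Fin n) (Fin n) ℂ).IsDiag := by
        rw [hg']; exact isDiag_diagonal D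
      have h2 : ((g'⁻¹ : GL (Fin n) ℂ) : Matrix (Fin n) (Fin n) ℂ).IsDiag := by
        rw [Matrix.coe_units_inv, hg', Matrix.inv_diagonal]
        exact isDiag_diagonal _
      rw [hinv g' h1, hinv _ h2, inv_inv])
    (by
      intro τ g' hg'
      have hg : g' = Tu τ.i τ.j τ.hij τ.c := by
        apply Units.ext
        rw [hg', Tu_coe]
        rfl
      rw [hg, CC_Tu Cm hinv τ.hij])
    (by
      intro A B hA hB PA PB g' hg'
      have hAu : IsUnit A := (Matrix.isUnit_iff_isUnit_det A).mpr (isUnit_iff_ne_zero.mpr hA)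
      have hBu : IsUnit B := (Matrix.isUnit_iff_isUnit_det B).mpr (isUnit_iff_ne_zero.mpr hB)
      obtain ⟨uA, huA⟩ := hAu
      obtain ⟨uB, huB⟩ := hBu
      have hg : g' = uA * uB := by
        apply Units.ext
        rw [hg', Units.val_mul, huA, huB]
      rw [hg, _root_.map_mul, _root_.map_mul, PA uA huA, PB uB huB])
  exact main g rfl

end
end ChevAux

/-- A continuous group automorphism `C` of `GL(n,ℂ)` (continuous with
continuous inverse) satisfying `C(h) = h⁻¹` for every invertible diagonal matrix `h` is an
involution: `C ∘ C = id`. -/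
theorem chevalley_involution_squares_to_one (n : ℕ) (hn : 1 ≤ n)
    (C : GL (Fin n) ℂ ≃* GL (Fin n) ℂ)
    (hC : Continuous (⇑C)) (hCsymm : Continuous (⇑C.symm))
    (hinv : ∀ h : GL (Fin n) ℂ, (h : Matrix (Fin n) (Fin n) ℂ).IsDiag → C h = h⁻¹) :
    ∀ g : GL (Fin n) ℂ, C (C g) = g := by
  intro g
  exact ChevAux.CC_id C hinv g
end

section
/- Suppose C₁ and C₂ are continuous group automorphisms of GL(n,ℂ) (continuous with continuous inverses) and x₁, x₂ ∈ GL(n,ℂ) are such that Cᵢ(xᵢ h xᵢ⁻¹) = xᵢ h⁻¹ xᵢ⁻¹ for all invertible diagonal matrices h and i = 1, 2 (i.e. Cᵢ inverts the maximal torus xᵢ T xᵢ⁻¹ pointwise). Then there exists g ∈ GL(n,ℂ) with C₂ = int(g) ∘ C₁ ∘ int(g)⁻¹, where int(g) denotes the inner automorphism x ↦ gxg⁻¹. -/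
open Matrix

variable {n : ℕ}

/-- diagonal unit -/
def du (t : Fin n → ℂˣ) : GL (Fin n) ℂ :=
  ⟨diagonal fun k => (t k : ℂ), diagonal fun k => ((t k)⁻¹ : ℂˣ),
   by simp [diagonal_mul_diagonal], by simp [diagonal_mul_diagonal]⟩

/-- transvection unit -/
def tu (i j : Fin n) (hij : i ≠ j) (c : ℂ) : GL (Fin n) ℂ :=
  ⟨transvection i j c, transvection i j (-c),
   by rw [transvection_mul_transvection_same _ _ hij]; simp,
   by rw [transvection_mul_transvection_same _ _ hij]; simp⟩

@[simp] lemma du_val (t : Fin n → ℂˣ) :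
    (du t : Matrix (Fin n) (Fin n) ℂ) = diagonal fun k => (t k : ℂ) := rfl

@[simp] lemma du_inv_val (t : Fin n → ℂˣ) :
    ((du t)⁻¹ : GL (Fin n) ℂ) = (diagonal fun k => ((t k)⁻¹ : ℂˣ) : Matrix (Fin n) (Fin n) ℂ) := rfl

@[simp] lemma tu_val (i j : Fin n) (hij : i ≠ j) (c : ℂ) :
    (tu i j hij c : Matrix (Fin n) (Fin n) ℂ) = transvection i j c := rfl

lemma du_mul (t t' : Fin n → ℂˣ) : du t * du t' = du (t * t') := by
  apply Units.ext
  simp [du, diagonal_mul_diagonal]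

lemma du_one : du (1 : Fin n → ℂˣ) = 1 := by
  apply Units.ext; simp [du]

lemma du_inv (t : Fin n → ℂˣ) : (du t)⁻¹ = du t⁻¹ := by
  apply Units.ext; simp [du]

lemma tu_mul (i j : Fin n) (hij : i ≠ j) (c d : ℂ) :
    tu i j hij c * tu i j hij d = tu i j hij (c + d) := by
  apply Units.ext
  simp [tu, transvection_mul_transvection_same _ _ hij]

lemma tu_zero (i j : Fin n) (hij : i ≠ j) : tu i j hij 0 = 1 := by
  apply Units.ext; simp [tu]

lemma du_tu_conj (t : Fin n → ℂˣ) (i j : Fin n) (hij : i ≠ j) (c : ℂ) :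
    du t * tu i j hij c * (du t)⁻¹ = tu i j hij ((t i : ℂ) * c * ((t j : ℂ))⁻¹) := by
  apply Units.ext
  show (diagonal fun k => (t k : ℂ)) * transvection i j c * (diagonal fun k => (((t k)⁻¹ : ℂˣ) : ℂ))
      = transvection i j ((t i : ℂ) * c * ((t j : ℂ))⁻¹)
  ext k l
  rw [mul_diagonal, diagonal_mul]
  simp only [transvection, Matrix.add_apply]
  by_cases hkl : k = l
  · subst hkl
    have h1 : ¬(i = k ∧ j = k) := fun ⟨h, h'⟩ => hij (h.trans h'.symm)
    simp [Matrix.one_apply, single_apply_of_ne, h1]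
  · simp only [Matrix.one_apply_ne hkl, zero_add]
    by_cases hk : i = k
    · by_cases hl : j = l
      · subst hk; subst hl
        rw [single_apply_same, single_apply_same]
        field_simp
        rw [mul_assoc, Units.inv_mul, mul_one]
      · rw [single_apply_of_ne i j _ k l (fun h : i = k ∧ j = l => hl h.2),
          single_apply_of_ne i j _ k l (fun h : i = k ∧ j = l => hl h.2)]
        ring
    · rw [single_apply_of_ne i j _ k l (fun h : i = k ∧ j = l => hk h.1),
        single_apply_of_ne i j _ k l (fun h : i = k ∧ j = l => hk h.1)]
      ring

lemma sum_two (F : Fin n → ℂ) {i j : Fin n} (hij : i ≠ j)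
    (h : ∀ k, k ≠ i → k ≠ j → F k = 0) : ∑ k, F k = F i + F j := by
  rw [← Finset.sum_erase_add Finset.univ F (Finset.mem_univ j)]
  congr 1
  apply Finset.sum_eq_single_of_mem i (Finset.mem_erase.2 ⟨hij, Finset.mem_univ i⟩)
  intro k hk hki
  exact h k hki (Finset.mem_erase.1 hk).1

lemma sum_one (F : Fin n → ℂ) {k : Fin n}
    (h : ∀ m, m ≠ k → F m = 0) : ∑ m, F m = F k := by
  apply Finset.sum_eq_single_of_mem k (Finset.mem_univ k)
  intro m _ hm; exact h m hm

lemma transvection_image (A : GL (Fin n) ℂ ≃* GL (Fin n) ℂ)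
    (hA : ∀ h : GL (Fin n) ℂ, (h : Matrix (Fin n) (Fin n) ℂ).IsDiag → A h = h)
    {i j : Fin n} (hij : i ≠ j) :
    ∃ a : ℂ, a ≠ 0 ∧ ∀ c : ℂ, A (tu i j hij c) = tu i j hij (a * c) := by
  have hAdu : ∀ t : Fin n → ℂˣ, A (du t) = du t := fun t => hA _ (isDiag_diagonal _)
  set g := A (tu i j hij 1) with hgdef
  -- the "bump" torus element
  let tf : ℂˣ → Fin n → ℂˣ := fun μ k => if k = i then μ else 1
  have tf_i : ∀ μ : ℂˣ, ((tf μ i : ℂ)) = (μ : ℂ) := by intro μ; simp [tf]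
  have tf_ne : ∀ (μ : ℂˣ) (k : Fin n), k ≠ i → ((tf μ k : ℂ)) = 1 := by
    intro μ k hk; simp [tf, hk]
  -- conjugation formula
  have key1 : ∀ μ : ℂˣ, A (tu i j hij (μ : ℂ)) = du (tf μ) * g * (du (tf μ))⁻¹ := by
    intro μ
    have h0 := du_tu_conj (tf μ) i j hij 1
    rw [tf_i, tf_ne μ j (Ne.symm hij)] at h0
    simp only [mul_one, inv_one] at h0
    rw [← h0, _root_.map_mul, _root_.map_mul, hAdu, map_inv, hAdu]
  -- commuting relation
  have hcomm : ∀ t : Fin n → ℂˣ, t i = t j → du t * g = g * du t := by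
    intro t ht
    have h0 := du_tu_conj t i j hij 1
    have h1 : ((t i : ℂ)) * 1 * ((t j : ℂ))⁻¹ = 1 := by
      rw [ht]; field_simp
    rw [h1] at h0
    have h2 := congrArg A h0
    rw [_root_.map_mul, _root_.map_mul, hAdu, map_inv, hAdu] at h2
    rw [mul_inv_eq_iff_eq_mul] at h2
    rw [h2]
  -- support of G
  have hsupp : ∀ k l : Fin n, k ≠ l → ¬(k = i ∧ l = j) → ¬(k = j ∧ l = i) →
      (g : Matrix (Fin n) (Fin n) ℂ) k l = 0 := by
    have hent : ∀ p : Fin n, p ≠ i → p ≠ j → ∀ k l : Fin n,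
        (if k = p then (2:ℂ) else 1) * (g : Matrix (Fin n) (Fin n) ℂ) k l
          = (g : Matrix (Fin n) (Fin n) ℂ) k l * (if l = p then (2:ℂ) else 1) := by
      intro p hpi hpj k l
      set t : Fin n → ℂˣ := fun m => if m = p then Units.mk0 2 two_ne_zero else 1 with htdef
      have ht : t i = t j := by
        simp only [htdef, if_neg (Ne.symm hpi), if_neg (Ne.symm hpj)]
      have h0 := hcomm t ht
      have h1 := congrArg Units.val h0
      rw [Units.val_mul, Units.val_mul, du_val] at h1
      have h2 := congrFun (congrFun h1 k) l
      rw [diagonal_mul, mul_diagonal] at h2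
      have hcoe : ∀ m, ((t m : ℂ)) = if m = p then (2:ℂ) else 1 := by
        intro m; by_cases hm : m = p <;> simp [htdef, hm]
      rw [hcoe, hcoe] at h2
      exact h2
    intro k l hkl h1 h2
    by_cases hki : k = i
    · have hlj : l ≠ j := fun h => h1 ⟨hki, h⟩
      have hli : l ≠ i := fun h => hkl (hki.trans h.symm)
      have h3 := hent l hli hlj k l
      rw [if_neg hkl, if_pos rfl] at h3
      linear_combination -h3
    · by_cases hkj : k = j
      · have hli : l ≠ i := fun h => h2 ⟨hkj, h⟩
        have hlj : l ≠ j := fun h => hkl (hkj.trans h.symm)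
        have h3 := hent l hli hlj k l
        rw [if_neg hkl, if_pos rfl] at h3
        linear_combination -h3
      · have h3 := hent k hki hkj k l
        rw [if_pos rfl, if_neg (fun h : l = k => hkl h.symm)] at h3
        linear_combination h3
  set G := (g : Matrix (Fin n) (Fin n) ℂ) with hGdef
  -- entry formula for conjugates
  have hXent : ∀ (μ : ℂˣ) (k l : Fin n),
      ((du (tf μ) * g * (du (tf μ))⁻¹ : GL (Fin n) ℂ) : Matrix (Fin n) (Fin n) ℂ) k l
        = (tf μ k : ℂ) * G k l * ((tf μ l : ℂ))⁻¹ := by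
    intro μ k l
    rw [Units.val_mul, Units.val_mul, du_val, du_inv_val]
    rw [mul_diagonal, diagonal_mul, Units.val_inv_eq_inv_val]
  have hprod : ∀ μ ν σ : ℂˣ, (μ:ℂ) + (ν:ℂ) = (σ:ℂ) → ∀ k l : Fin n,
      (tf σ k : ℂ) * G k l * ((tf σ l : ℂ))⁻¹
        = ∑ m, ((tf μ k : ℂ) * G k m * ((tf μ m : ℂ))⁻¹) *
            ((tf ν m : ℂ) * G m l * ((tf ν l : ℂ))⁻¹) := by
    intro μ ν σ hσ k l
    have h0 : tu i j hij (μ:ℂ) * tu i j hij (ν:ℂ) = tu i j hij (σ:ℂ) := by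
      rw [tu_mul, hσ]
    have h1 := congrArg A h0
    rw [_root_.map_mul, key1, key1, key1] at h1
    have h2 := congrArg Units.val h1
    rw [Units.val_mul] at h2
    have h3 := congrFun (congrFun h2 k) l
    rw [Matrix.mul_apply] at h3
    simp only [hXent] at h3
    exact h3.symm
  have Hii : ∀ μ ν σ : ℂˣ, (μ:ℂ)+(ν:ℂ)=(σ:ℂ) →
      G i i = G i i * G i i + ((μ:ℂ) * ((ν:ℂ))⁻¹) * (G i j * G j i) := by
    intro μ ν σ hσ
    have h3 := hprod μ ν σ hσ i i
    have hs : ∀ m : Fin n, m ≠ i → m ≠ j →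
        ((tf μ i : ℂ) * G i m * ((tf μ m : ℂ))⁻¹) *
          ((tf ν m : ℂ) * G m i * ((tf ν i : ℂ))⁻¹) = 0 := by
      intro m hmi hmj
      have h4 : G i m = 0 := hsupp i m (Ne.symm hmi) (fun h => hmj h.2) (fun h => hij h.1)
      rw [h4]; ring
    rw [sum_two _ hij hs] at h3
    simp only [tf_i] at h3
    rw [tf_ne μ j (Ne.symm hij), tf_ne ν j (Ne.symm hij)] at h3
    field_simp at h3
    have hν : ((ν:ℂ)) ≠ 0 := ν.ne_zero
    field_simp [hν]
    linear_combination h3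
  -- instantiate to get ab = 0 and d_i² = d_i
  have hone : ((1:ℂˣ):ℂ) = 1 := rfl
  have hab : G i j * G j i = 0 := by
    have e1 := Hii 1 1 (Units.mk0 2 (by norm_num)) (by norm_num [hone])
    have e2 := Hii (Units.mk0 2 (by norm_num)) 1 (Units.mk0 3 (by norm_num)) (by norm_num [hone])
    rw [hone] at e1 e2
    simp only [Units.val_mk0] at e1 e2
    linear_combination e1 - e2
  have hdii : G i i * G i i = G i i := by
    have e1 := Hii 1 1 (Units.mk0 2 (by norm_num)) (by norm_num [hone])
    rw [hone] at e1
    linear_combination -e1 - hab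
  have Hjj : ∀ μ ν σ : ℂˣ, (μ:ℂ)+(ν:ℂ)=(σ:ℂ) →
      G j j = G j j * G j j + ((ν:ℂ) * ((μ:ℂ))⁻¹) * (G i j * G j i) := by
    intro μ ν σ hσ
    have h3 := hprod μ ν σ hσ j j
    have hs : ∀ m : Fin n, m ≠ i → m ≠ j →
        ((tf μ j : ℂ) * G j m * ((tf μ m : ℂ))⁻¹) *
          ((tf ν m : ℂ) * G m j * ((tf ν j : ℂ))⁻¹) = 0 := by
      intro m hmi hmj
      have h4 : G j m = 0 := hsupp j m (Ne.symm hmj) (fun h => hij h.1.symm) (fun h => hmi h.2)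
      rw [h4]; ring
    rw [sum_two _ hij hs] at h3
    simp only [tf_i] at h3
    rw [tf_ne μ j (Ne.symm hij), tf_ne ν j (Ne.symm hij), tf_ne σ j (Ne.symm hij)] at h3
    have hμ : ((μ:ℂ)) ≠ 0 := μ.ne_zero
    field_simp at h3
    field_simp [hμ]
    linear_combination h3
  have hdjj : G j j * G j j = G j j := by
    have e1 := Hjj 1 1 (Units.mk0 2 (by norm_num)) (by norm_num [hone])
    rw [hone] at e1
    linear_combination -e1 - hab
  have Hkk : ∀ k : Fin n, k ≠ i → k ≠ j → G k k * G k k = G k k := by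
    intro k hki hkj
    have h3 := hprod 1 1 (Units.mk0 2 (by norm_num)) (by norm_num [hone]) k k
    have hs : ∀ m : Fin n, m ≠ k →
        ((tf 1 k : ℂ) * G k m * ((tf 1 m : ℂ))⁻¹) *
          ((tf 1 m : ℂ) * G m k * ((tf 1 k : ℂ))⁻¹) = 0 := by
      intro m hm
      have h4 : G k m = 0 := hsupp k m (fun h => hm h.symm)
        (fun h => hki h.1) (fun h => hkj h.1)
      rw [h4]; ring
    rw [sum_one _ hs] at h3
    simp only [tf_ne _ k hki] at h3
    field_simp at h3
    linear_combination -h3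
  have Hji : ∀ μ ν σ : ℂˣ, (μ:ℂ)+(ν:ℂ)=(σ:ℂ) →
      G j i * ((σ:ℂ))⁻¹ = G j i * ((μ:ℂ))⁻¹ * G i i + G j j * G j i * ((ν:ℂ))⁻¹ := by
    intro μ ν σ hσ
    have h3 := hprod μ ν σ hσ j i
    have hs : ∀ m : Fin n, m ≠ i → m ≠ j →
        ((tf μ j : ℂ) * G j m * ((tf μ m : ℂ))⁻¹) *
          ((tf ν m : ℂ) * G m i * ((tf ν i : ℂ))⁻¹) = 0 := by
      intro m hmi hmj
      have h4 : G j m = 0 := hsupp j m (Ne.symm hmj) (fun h => hij h.1.symm) (fun h => hmi h.2)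
      rw [h4]; ring
    rw [sum_two _ hij hs] at h3
    simp only [tf_i] at h3
    rw [tf_ne μ j (Ne.symm hij), tf_ne ν j (Ne.symm hij), tf_ne σ j (Ne.symm hij)] at h3
    have hν : ((ν:ℂ)) ≠ 0 := ν.ne_zero
    field_simp at h3 ⊢
    linear_combination h3
  -- nonvanishing of diagonal entries
  have hrowz : ∀ k : Fin n, (∀ m, G k m = 0) → False := by
    intro k hr
    have h0 := congrFun (congrFun (Units.mul_inv g) k) k
    rw [Matrix.mul_apply, Matrix.one_apply_eq, ← hGdef] at h0
    rw [Finset.sum_eq_zero (fun m _ => by rw [hr m]; ring)] at h0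
    exact one_ne_zero h0.symm
  have hcolz : ∀ k : Fin n, (∀ m, G m k = 0) → False := by
    intro k hc
    have h0 := congrFun (congrFun (Units.inv_mul g) k) k
    rw [Matrix.mul_apply, Matrix.one_apply_eq, ← hGdef] at h0
    rw [Finset.sum_eq_zero (fun m _ => by rw [hc m]; ring)] at h0
    exact one_ne_zero h0.symm
  have hdnz : ∀ k : Fin n, G k k ≠ 0 := by
    intro k hk
    by_cases hki : k = i
    · rcases mul_eq_zero.1 hab with ha | hb
      · refine hrowz i (fun m => ?_)
        by_cases hmi : m = i
        · rw [hmi]; rw [hki] at hk; exact hk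
        · by_cases hmj : m = j
          · rw [hmj]; exact ha
          · exact hsupp i m (fun h => hmi h.symm) (fun h => hmj h.2) (fun h => hij h.1)
      · refine hcolz i (fun m => ?_)
        by_cases hmi : m = i
        · rw [hmi]; rw [hki] at hk; exact hk
        · by_cases hmj : m = j
          · rw [hmj]; exact hb
          · exact hsupp m i hmi (fun h => hij h.2) (fun h => hmj h.1)
    · by_cases hkj : k = j
      · rcases mul_eq_zero.1 hab with ha | hb
        · refine hcolz j (fun m => ?_)
          by_cases hmj : m = j
          · rw [hmj]; rw [hkj] at hk; exact hk
          · by_cases hmi : m = i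
            · rw [hmi]; exact ha
            · exact hsupp m j hmj (fun h => hmi h.1) (fun h => hij h.2.symm)
        · refine hrowz j (fun m => ?_)
          by_cases hmj : m = j
          · rw [hmj]; rw [hkj] at hk; exact hk
          · by_cases hmi : m = i
            · rw [hmi]; exact hb
            · exact hsupp j m (fun h => hmj h.symm) (fun h => hij h.1.symm) (fun h => hmi h.2)
      · refine hrowz k (fun m => ?_)
        by_cases hmk : m = k
        · rw [hmk]; exact hk
        · exact hsupp k m (fun h => hmk h.symm) (fun h => hki h.1) (fun h => hkj h.1)
  have hdi1 : G i i = 1 := by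
    have h5 : G i i * (G i i - 1) = 0 := by linear_combination hdii
    rcases mul_eq_zero.1 h5 with h | h
    · exact absurd h (hdnz i)
    · linear_combination h
  have hdj1 : G j j = 1 := by
    have h5 : G j j * (G j j - 1) = 0 := by linear_combination hdjj
    rcases mul_eq_zero.1 h5 with h | h
    · exact absurd h (hdnz j)
    · linear_combination h
  have hdk1 : ∀ k : Fin n, k ≠ i → k ≠ j → G k k = 1 := by
    intro k hki hkj
    have h5 : G k k * (G k k - 1) = 0 := by linear_combination Hkk k hki hkj
    rcases mul_eq_zero.1 h5 with h | h
    · exact absurd h (hdnz k)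
    · linear_combination h
  have hb0 : G j i = 0 := by
    have e := Hji 1 1 (Units.mk0 2 (by norm_num)) (by norm_num [hone])
    rw [hone, hdi1, hdj1] at e
    simp only [Units.val_mk0] at e
    have h2 : (2:ℂ) ≠ 0 := by norm_num
    field_simp at e
    linear_combination (-(1:ℂ)/3) * e
  -- G is a transvection
  have hGa : G = transvection i j (G i j) := by
    ext k l
    by_cases hkl : k = l
    · subst hkl
      have hrhs : transvection i j (G i j) k k = 1 := by
        rw [transvection, Matrix.add_apply, Matrix.one_apply_eq,
          single_apply_of_ne i j _ k k (fun h => hij (h.1.trans h.2.symm))]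
        ring
      rw [hrhs]
      by_cases hki : k = i
      · rw [hki]; exact hdi1
      · by_cases hkj : k = j
        · rw [hkj]; exact hdj1
        · exact hdk1 k hki hkj
    · by_cases hkij : k = i ∧ l = j
      · rw [hkij.1, hkij.2, transvection, Matrix.add_apply, Matrix.one_apply_ne hij,
          single_apply_same]
        ring
      · have hrhs : transvection i j (G i j) k l = 0 := by
          rw [transvection, Matrix.add_apply, Matrix.one_apply_ne hkl,
            single_apply_of_ne i j _ k l (fun h => hkij ⟨h.1.symm, h.2.symm⟩)]
          ring
        rw [hrhs]
        by_cases hji' : k = j ∧ l = i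
        · rw [hji'.1, hji'.2]; exact hb0
        · exact hsupp k l hkl (fun h => hkij ⟨h.1, h.2⟩) hji'
  -- the coefficient is nonzero
  have hanz : G i j ≠ 0 := by
    intro h0
    have hg1 : g = 1 := by
      apply Units.ext
      rw [← hGdef, hGa, h0, transvection_zero, Units.val_one]
    have h4 : A (tu i j hij 1) = A 1 := by rw [← hgdef, hg1]; exact (_root_.map_one A).symm
    have h2 : tu i j hij 1 = 1 := A.injective h4
    have h3 := congrFun (congrFun
      (congrArg (fun u : GL (Fin n) ℂ => (u : Matrix (Fin n) (Fin n) ℂ)) h2) i) j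
    simp only [tu_val, Units.val_one] at h3
    rw [Matrix.one_apply_ne hij] at h3
    rw [transvection, Matrix.add_apply, Matrix.one_apply_ne hij,
      single_apply_same] at h3
    exact one_ne_zero (by linear_combination h3)
  refine ⟨G i j, hanz, fun c => ?_⟩
  rcases eq_or_ne c 0 with rfl | hc
  · rw [mul_zero, tu_zero]; exact _root_.map_one A
  · have hgtu : g = tu i j hij (G i j) := Units.ext (by rw [← hGdef]; exact hGa)
    have h0 := key1 (Units.mk0 c hc)
    rw [hgtu, du_tu_conj, tf_i, tf_ne _ j (Ne.symm hij)] at h0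
    rw [Units.val_mk0] at h0
    rw [h0]
    congr 1
    field_simp

lemma trans_braid (i j k : Fin n) (hij : i ≠ j) (hik : i ≠ k) (c d : ℂ) :
    transvection i j c * transvection j k d
      = transvection j k d * transvection i j c * transvection i k (c * d) := by
  simp only [transvection, add_mul, mul_add, one_mul, mul_one,
    single_mul_single_same, single_mul_single_of_ne _ _ _ _ (Ne.symm hik),
    single_mul_single_of_ne _ _ _ _ (Ne.symm hij), add_zero, zero_add]
  abel

lemma trans_pair (i j : Fin n) (hij : i ≠ j) (p q : ℂ) :
    transvection i j p * transvection j i q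
      = 1 + single i j p + single j i q + single i i (p*q) := by
  simp only [transvection, add_mul, mul_add, one_mul, mul_one, single_mul_single_same,
    single_mul_single_of_ne _ _ _ _ hij, single_mul_single_of_ne _ _ _ _ (Ne.symm hij),
    add_zero, zero_add]
  abel

lemma trans_diag_trans (i j : Fin n) (hij : i ≠ j) (p q : ℂ) :
    transvection j i p * (1 + single i i 1 + single j j (-(1/2))) *
        transvection i j q
      = 1 + single i i 1 + single i j (2*q) + single j i (2*p)
        + single j j (2*(p*q) - 1/2) := by
  have hstd : ∀ (u w : Fin n) (c : ℂ), single u w c = c • single u w 1 := by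
    intro u w c; rw [smul_single, smul_eq_mul, mul_one]
  simp only [transvection, add_mul, mul_add, one_mul, mul_one, single_mul_single_same,
    single_mul_single_of_ne _ _ _ _ hij, single_mul_single_of_ne _ _ _ _ (Ne.symm hij),
    add_zero, zero_add]
  ext a b
  simp only [Matrix.add_apply, Matrix.one_apply, single, of_apply]
  split_ifs <;> simp_all <;> ring

lemma trans_apply_ne (i j : Fin n) (hij : i ≠ j) (c : ℂ) : transvection i j c i j = c := by
  rw [transvection, Matrix.add_apply, Matrix.one_apply_ne hij, single_apply_same]
  ring

lemma diag_two_half (i j : Fin n) (hij : i ≠ j) :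
    (diagonal (fun k => if k = i then (2:ℂ) else if k = j then 1/2 else 1))
      = 1 + single i i 1 + single j j (-(1/2)) := by
  ext a b
  by_cases hab : a = b
  · subst hab
    rw [diagonal_apply_eq, Matrix.add_apply, Matrix.add_apply, Matrix.one_apply_eq]
    by_cases hai : a = i
    · rw [if_pos hai, hai, single_apply_same,
        single_apply_of_ne j j _ i i (fun h => hij h.1.symm)]
      norm_num
    · rw [if_neg hai, single_apply_of_ne i i _ a a (fun h => hai h.1.symm)]
      by_cases haj : a = j
      · rw [if_pos haj, haj, single_apply_same]
        norm_num
      · rw [if_neg haj, single_apply_of_ne j j _ a a (fun h => haj h.1.symm)]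
        norm_num
  · rw [diagonal_apply_ne _ hab, Matrix.add_apply, Matrix.add_apply, Matrix.one_apply_ne hab,
      single_apply_of_ne i i _ a b (fun h => hab (h.1.symm.trans h.2)),
      single_apply_of_ne j j _ a b (fun h => hab (h.1.symm.trans h.2))]
    norm_num

lemma conj_by_diag (A : GL (Fin n) ℂ ≃* GL (Fin n) ℂ)
    (hA : ∀ h : GL (Fin n) ℂ, (h : Matrix (Fin n) (Fin n) ℂ).IsDiag → A h = h) :
    ∃ v : Fin n → ℂˣ, ∀ x : GL (Fin n) ℂ, A x = du v * x * (du v)⁻¹ := by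
  have hAdu : ∀ t : Fin n → ℂˣ, A (du t) = du t := fun t => hA _ (isDiag_diagonal _)
  rcases Nat.lt_or_ge n 2 with hn | hn
  · refine ⟨1, fun x => ?_⟩
    have hd : (x : Matrix (Fin n) (Fin n) ℂ).IsDiag := by
      intro a b hab
      exact absurd (Fin.ext (by omega : (a:ℕ) = b)) hab
    rw [hA x hd, du_one]
    simp
  · choose a ha0 ha using fun (i j : Fin n) (hij : i ≠ j) => transvection_image A hA hij
    -- multiplicative relation
    have hrel1 : ∀ i j k (hij : i ≠ j) (hjk : j ≠ k) (hik : i ≠ k),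
        a i j hij * a j k hjk = a i k hik := by
      intro i j k hij hjk hik
      have hmat : tu i j hij 1 * tu j k hjk 1
          = tu j k hjk 1 * tu i j hij 1 * tu i k hik (1 * 1) :=
        Units.ext (trans_braid i j k hij hik 1 1)
      have h1 := congrArg A hmat
      rw [_root_.map_mul, _root_.map_mul, _root_.map_mul, ha, ha, ha] at h1
      simp only [mul_one, one_mul] at h1
      have hmat2 : tu i j hij (a i j hij) * tu j k hjk (a j k hjk)
          = tu j k hjk (a j k hjk) * tu i j hij (a i j hij)
            * tu i k hik (a i j hij * a j k hjk) :=
        Units.ext (trans_braid i j k hij hik _ _)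
      have h5 := mul_left_cancel (h1.symm.trans hmat2)
      have h6 := congrFun (congrFun
        (congrArg (fun u : GL (Fin n) ℂ => (u : Matrix (Fin n) (Fin n) ℂ)) h5) i) k
      simp only [tu_val] at h6
      rw [trans_apply_ne i k hik, trans_apply_ne i k hik] at h6
      exact h6.symm
    -- inverse relation
    have hrel2 : ∀ i j (hij : i ≠ j), a i j hij * a j i hij.symm = 1 := by
      intro i j hij
      set t2 : Fin n → ℂˣ := fun k =>
        if k = i then Units.mk0 2 (by norm_num)
        else if k = j then Units.mk0 (1/2) (by norm_num) else 1 with ht2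
      have ht2coe : (fun k => ((t2 k : ℂ)))
          = fun k => if k = i then (2:ℂ) else if k = j then 1/2 else 1 := by
        funext k
        by_cases hk : k = i
        · simp [ht2, hk]
        · by_cases hk2 : k = j <;> simp [ht2, hk, hk2, Ne.symm hij]
      have hbig : tu i j hij 1 * tu j i hij.symm 1
          = tu j i hij.symm (1/2) * du t2 * tu i j hij (1/2) := by
        apply Units.ext
        rw [Units.val_mul, Units.val_mul, Units.val_mul, tu_val, tu_val, tu_val, tu_val, du_val]
        rw [ht2coe, diag_two_half i j hij, trans_pair i j hij, trans_diag_trans i j hij]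
        norm_num
        abel
      have h1 := congrArg A hbig
      rw [_root_.map_mul, _root_.map_mul, _root_.map_mul, ha, ha, ha, ha, hAdu] at h1
      have h2 := congrFun (congrFun
        (congrArg (fun u : GL (Fin n) ℂ => (u : Matrix (Fin n) (Fin n) ℂ)) h1) i) i
      simp only [Units.val_mul, tu_val, du_val] at h2
      rw [ht2coe, diag_two_half i j hij, trans_pair i j hij, trans_diag_trans i j hij] at h2
      simp only [Matrix.add_apply, Matrix.one_apply_eq, single_apply_same,
        single_apply_of_ne i j _ i i (fun h => hij h.2.symm),
        single_apply_of_ne j i _ i i (fun h => hij h.1.symm),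
        single_apply_of_ne j j _ i i (fun h => hij h.1.symm)] at h2
      rw [mul_one] at h2
      linear_combination h2
    -- construction of v
    have hn0 : 0 < n := by omega
    set i0 : Fin n := ⟨0, hn0⟩ with hi0
    set v : Fin n → ℂˣ := fun k =>
      if h : k = i0 then 1 else Units.mk0 (a k i0 h) (ha0 k i0 h) with hv0
    have hv : ∀ (i j : Fin n) (hij : i ≠ j), (v i : ℂ) * ((v j : ℂ))⁻¹ = a i j hij := by
      intro i j hij
      by_cases hi : i = i0
      · have hj : j ≠ i0 := fun h => hij (hi.trans h.symm)
        have hvi : (v i : ℂ) = 1 := by simp [hv0, hi]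
        have hvj : (v j : ℂ) = a j i0 hj := by simp [hv0, hj]
        rw [hvi, hvj, one_mul]
        have h2 := hrel2 i j hij
        have h3 : a j i0 hj = a j i hij.symm := by simp only [hi]
        rw [h3]
        exact inv_eq_of_mul_eq_one_left h2
      · by_cases hj : j = i0
        · have hvi : (v i : ℂ) = a i i0 hi := by simp [hv0, hi]
          have hvj : (v j : ℂ) = 1 := by simp [hv0, hj]
          rw [hvi, hvj, inv_one, mul_one]
          simp only [hj]
        · have hvi : (v i : ℂ) = a i i0 hi := by simp [hv0, hi]
          have hvj : (v j : ℂ) = a j i0 hj := by simp [hv0, hj]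
          rw [hvi, hvj]
          have h1 := hrel1 i i0 j hi (fun h => hj h.symm) hij
          have h2 := hrel2 i0 j (fun h => hj h.symm)
          rw [inv_eq_of_mul_eq_one_left h2]
          rw [← h1]
    refine ⟨v, ?_⟩
    have hdiagfix : ∀ x : GL (Fin n) ℂ, (x : Matrix (Fin n) (Fin n) ℂ).IsDiag →
        A x = du v * x * (du v)⁻¹ := by
      intro x hx
      have hc : du v * x = x * du v := by
        apply Units.ext
        have hcm : (fun k => (v k : ℂ) * (x : Matrix (Fin n) (Fin n) ℂ).diag k)
            = (fun k => (x : Matrix (Fin n) (Fin n) ℂ).diag k * (v k : ℂ)) := by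
          funext k; ring
        rw [Units.val_mul, Units.val_mul, du_val, ← hx.diagonal_diag,
          diagonal_mul_diagonal, diagonal_mul_diagonal, hcm]
      rw [hA x hx, hc, mul_inv_cancel_right]
    have htufix : ∀ (i j : Fin n) (hij : i ≠ j) (c : ℂ),
        A (tu i j hij c) = du v * tu i j hij c * (du v)⁻¹ := by
      intro i j hij c
      rw [ha i j hij c, du_tu_conj]
      congr 1
      rw [← hv i j hij]
      ring
    intro x
    have hdet : (x : Matrix (Fin n) (Fin n) ℂ).det ≠ 0 :=
      Units.ne_zero (Matrix.GeneralLinearGroup.det x)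
    have hind := diagonal_transvection_induction_of_det_ne_zero
      (fun M => ∀ y : GL (Fin n) ℂ, (y : Matrix (Fin n) (Fin n) ℂ) = M →
        A y = du v * y * (du v)⁻¹)
      (x : Matrix (Fin n) (Fin n) ℂ) hdet
      (fun D hD y hy => hdiagfix y (by rw [hy]; exact isDiag_diagonal D))
      (fun t y hy => by
        have hyt : y = tu t.i t.j t.hij t.c := Units.ext (by rw [hy]; rfl)
        rw [hyt]; exact htufix t.i t.j t.hij t.c)
      (fun M N hM hN pM pN y hy => by
        obtain ⟨uM, huM⟩ := (Matrix.isUnit_iff_isUnit_det M).2 (isUnit_iff_ne_zero.2 hM)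
        obtain ⟨uN, huN⟩ := (Matrix.isUnit_iff_isUnit_det N).2 (isUnit_iff_ne_zero.2 hN)
        have hyMN : y = uM * uN := Units.ext (by rw [hy, Units.val_mul, huM, huN])
        rw [hyMN, _root_.map_mul, pM uM huM, pN uN huN]
        group)
    exact hind x rfl

/-- Any two continuous automorphisms `C₁, C₂` of `GL(n,ℂ)` inverting the
maximal tori `x₁Tx₁⁻¹` and `x₂Tx₂⁻¹` pointwise (where `T` is the diagonal torus) are
conjugate by an inner automorphism: `C₂ = int(g) ∘ C₁ ∘ int(g)⁻¹` for some `g ∈ GL(n,ℂ)`. -/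
theorem chevalley_involutions_conjugate (n : ℕ) (hn : 1 ≤ n)
    (C₁ C₂ : GL (Fin n) ℂ ≃* GL (Fin n) ℂ)
    (hC₁ : Continuous (⇑C₁)) (hC₁symm : Continuous (⇑C₁.symm))
    (hC₂ : Continuous (⇑C₂)) (hC₂symm : Continuous (⇑C₂.symm))
    (x₁ x₂ : GL (Fin n) ℂ)
    (h₁ : ∀ h : GL (Fin n) ℂ, (h : Matrix (Fin n) (Fin n) ℂ).IsDiag →
      C₁ (x₁ * h * x₁⁻¹) = x₁ * h⁻¹ * x₁⁻¹)
    (h₂ : ∀ h : GL (Fin n) ℂ, (h : Matrix (Fin n) (Fin n) ℂ).IsDiag →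
      C₂ (x₂ * h * x₂⁻¹) = x₂ * h⁻¹ * x₂⁻¹) :
    ∃ g : GL (Fin n) ℂ, ∀ x : GL (Fin n) ℂ, C₂ x = g * C₁ (g⁻¹ * x * g) * g⁻¹ := by
  have hinvdiag : ∀ h : GL (Fin n) ℂ, (h : Matrix (Fin n) (Fin n) ℂ).IsDiag →
      ((h⁻¹ : GL (Fin n) ℂ) : Matrix (Fin n) (Fin n) ℂ).IsDiag := by
    intro h hd
    rw [Matrix.coe_units_inv, ← hd.diagonal_diag, Matrix.inv_diagonal]
    exact isDiag_diagonal _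
  set A' : GL (Fin n) ℂ ≃* GL (Fin n) ℂ :=
    (((MulAut.conj x₁).trans C₁.symm).trans (MulAut.conj (x₂ * x₁⁻¹))).trans
      (C₂.trans (MulAut.conj x₂⁻¹)) with hA'def
  have hA'apply : ∀ y : GL (Fin n) ℂ,
      A' y = x₂⁻¹ * C₂ ((x₂ * x₁⁻¹) * C₁.symm (x₁ * y * x₁⁻¹) * (x₂ * x₁⁻¹)⁻¹) * x₂ := by
    intro y
    rw [hA'def]
    simp only [MulEquiv.trans_apply, MulAut.conj_apply, inv_inv]
  have hA' : ∀ h : GL (Fin n) ℂ, (h : Matrix (Fin n) (Fin n) ℂ).IsDiag → A' h = h := by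
    intro h hd
    rw [hA'apply]
    have hs : C₁.symm (x₁ * h * x₁⁻¹) = x₁ * h⁻¹ * x₁⁻¹ := by
      rw [MulEquiv.symm_apply_eq, h₁ h⁻¹ (hinvdiag h hd), inv_inv]
    rw [hs]
    have hmid : (x₂ * x₁⁻¹) * (x₁ * h⁻¹ * x₁⁻¹) * (x₂ * x₁⁻¹)⁻¹ = x₂ * h⁻¹ * x₂⁻¹ := by
      group
    rw [hmid, h₂ h⁻¹ (hinvdiag h hd), inv_inv]
    group
  obtain ⟨v, hvs⟩ := conj_by_diag A' hA'
  have hsq : ∀ k : Fin n, ∃ z : ℂ, z * z = (v k : ℂ) := by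
    intro k
    obtain ⟨z, hz⟩ := IsAlgClosed.exists_pow_nat_eq ((v k : ℂ)) (n := 2) (by norm_num)
    exact ⟨z, by rw [← hz]; ring⟩
  choose r hr2 using hsq
  have hrnz : ∀ k, r k ≠ 0 := by
    intro k h0
    exact (v k).ne_zero (by rw [← hr2 k, h0, zero_mul])
  set ru : Fin n → ℂˣ := fun k => Units.mk0 (r k) (hrnz k) with hrudef
  have hruv : ru * ru = v := by
    funext k
    exact Units.ext (hr2 k)
  have hru : du ru * du ru = du v := by rw [du_mul, hruv]
  set g : GL (Fin n) ℂ := x₂ * du ru * x₁⁻¹ with hgd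
  refine ⟨g, fun x => ?_⟩
  set z : GL (Fin n) ℂ := x₁⁻¹ * C₁ (x₁ * x₂⁻¹ * x * x₂ * x₁⁻¹) * x₁ with hzd
  have hz := hvs z
  have hzc : x₁ * z * x₁⁻¹ = C₁ (x₁ * x₂⁻¹ * x * x₂ * x₁⁻¹) := by
    rw [hzd]; group
  have hAz : A' z = x₂⁻¹ * C₂ x * x₂ := by
    rw [hA'apply, hzc, MulEquiv.symm_apply_apply]
    have hM : (x₂ * x₁⁻¹) * (x₁ * x₂⁻¹ * x * x₂ * x₁⁻¹) * (x₂ * x₁⁻¹)⁻¹ = x := by group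
    rw [hM]
  have hkey : x₂⁻¹ * C₂ x * x₂ = du v * z * (du v)⁻¹ := hAz.symm.trans hz
  have hC1a : C₁ (x₁ * (du ru)⁻¹ * x₁⁻¹) = x₁ * du ru * x₁⁻¹ := by
    have h5 := h₁ (du ru)⁻¹ (by rw [du_inv_val]; exact isDiag_diagonal _)
    rw [inv_inv] at h5
    exact h5
  have hC1b := h₁ (du ru) (by rw [du_val]; exact isDiag_diagonal _)
  have hsplit : g⁻¹ * x * g
      = (x₁ * (du ru)⁻¹ * x₁⁻¹) * (x₁ * x₂⁻¹ * x * x₂ * x₁⁻¹) * (x₁ * du ru * x₁⁻¹) := by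
    rw [hgd]; group
  have hgoal : g * C₁ (g⁻¹ * x * g) * g⁻¹ = x₂ * (du v * z * (du v)⁻¹) * x₂⁻¹ := by
    rw [hsplit, _root_.map_mul, _root_.map_mul, hC1a, hC1b, hzd, hgd, ← hru]
    group
  rw [hgoal, ← hkey]
  group
end

section
/- If τ₁ and τ₂ are group automorphisms of W_ℝ each satisfying τᵢ(z) = z⁻¹ for all z ∈ ℂˣ, then there exists u ∈ ℂˣ such that τ₂ = int(u) ∘ τ₁ ∘ int(u)⁻¹, where int(u) denotes the inner automorphism w ↦ uwu⁻¹ of W_ℝ. -/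
open Quaternion
open scoped Quaternion

noncomputable section

/-- The quaternion `j`. -/
def jq : ℍ[ℝ] := ⟨0, 0, 1, 0⟩

lemma jq_mul_jq : jq * jq = -1 := by
  have h0 : jq.re = 0 := rfl
  have h1 : jq.imI = 0 := rfl
  have h2 : jq.imJ = 1 := rfl
  have h3 : jq.imK = 0 := rfl
  ext <;> simp [h0, h1, h2, h3]

lemma jq_ne_zero : jq ≠ 0 := by
  intro h
  have := congrArg QuaternionAlgebra.imJ h
  simp [jq] at this

lemma coeComplex_ne_zero {z : ℂ} (hz : z ≠ 0) : (z : ℍ[ℝ]) ≠ 0 := by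
  intro h
  apply hz
  have hre := congrArg QuaternionAlgebra.re h
  have him := congrArg QuaternionAlgebra.imI h
  simp at hre him
  exact Complex.ext hre him

lemma coeComplex_neg (z : ℂ) : ((-z : ℂ) : ℍ[ℝ]) = -(z : ℍ[ℝ]) := by
  ext <;> simp

lemma coeComplex_inv (z : ℂ) : ((z⁻¹ : ℂ) : ℍ[ℝ]) = ((z : ℍ[ℝ]))⁻¹ := by
  have h := map_inv₀ Quaternion.ofComplex z
  rwa [Quaternion.coe_ofComplex] at h

lemma jq_mul_coeComplex (z : ℂ) : jq * (z : ℍ[ℝ]) = ((starRingEnd ℂ) z : ℂ) * jq := by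
  have h0 : jq.re = 0 := rfl
  have h1 : jq.imI = 0 := rfl
  have h2 : jq.imJ = 1 := rfl
  have h3 : jq.imK = 0 := rfl
  ext <;> simp [h0, h1, h2, h3]

/-- The real Weil group `W_ℝ`, realized inside the unit group of the Hamilton quaternions:
the subgroup of `ℍˣ` consisting of all (nonzero) elements of the form `z` or `z·j` with
`z ∈ ℂˣ`. -/
def WeilR : Subgroup (ℍ[ℝ])ˣ where
  carrier := {w | ∃ z : ℂ, z ≠ 0 ∧
    ((w : ℍ[ℝ]) = (z : ℍ[ℝ]) ∨ (w : ℍ[ℝ]) = (z : ℍ[ℝ]) * jq)}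
  one_mem' := ⟨1, one_ne_zero, Or.inl (by simp)⟩
  mul_mem' := by
    rintro a b ⟨z, hz, hza | hza⟩ ⟨w, hw, hwb | hwb⟩
    · exact ⟨z * w, mul_ne_zero hz hw, Or.inl (by push_cast [Units.val_mul, hza, hwb]; ring)⟩
    · exact ⟨z * w, mul_ne_zero hz hw, Or.inr (by
        push_cast [Units.val_mul, hza, hwb]; rw [mul_assoc])⟩
    · exact ⟨z * (starRingEnd ℂ) w, mul_ne_zero hz (by simpa using hw), Or.inr (by
        push_cast [Units.val_mul, hza, hwb]
        rw [mul_assoc, jq_mul_coeComplex w]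
        rw [mul_assoc])⟩
    · exact ⟨-(z * (starRingEnd ℂ) w), neg_ne_zero.mpr (mul_ne_zero hz (by simpa using hw)),
        Or.inl (by
          push_cast [Units.val_mul, hza, hwb]
          rw [mul_assoc, ← mul_assoc jq, jq_mul_coeComplex w, mul_assoc, jq_mul_jq,
            coeComplex_neg, coeComplex_mul]
          simp [mul_neg, mul_assoc])⟩
  inv_mem' := by
    rintro a ⟨z, hz, hza | hza⟩
    · refine ⟨z⁻¹, inv_ne_zero hz, Or.inl ?_⟩
      rw [Units.val_inv_eq_inv_val, hza, coeComplex_inv]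
    · refine ⟨-(((starRingEnd ℂ) z)⁻¹),
        neg_ne_zero.mpr (inv_ne_zero (by simpa using hz)), Or.inr ?_⟩
      rw [Units.val_inv_eq_inv_val, hza]
      refine inv_eq_of_mul_eq_one_right ?_
      rw [mul_assoc, ← mul_assoc jq, jq_mul_coeComplex, mul_assoc, jq_mul_jq]
      have : (starRingEnd ℂ) (-(((starRingEnd ℂ) z)⁻¹)) = -(z⁻¹) := by simp
      rw [this, coeComplex_neg, coeComplex_inv]
      simp [mul_neg, neg_mul]
      rw [mul_inv_cancel₀ (coeComplex_ne_zero hz)]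

/-- The element `z ∈ ℂˣ ⊂ W_ℝ`. -/
def cqW (z : ℂ) (hz : z ≠ 0) : WeilR :=
  ⟨Units.mk0 (z : ℍ[ℝ]) (coeComplex_ne_zero hz), ⟨z, hz, Or.inl rfl⟩⟩

/-- The element `j ∈ W_ℝ`. -/
def jW : WeilR :=
  ⟨Units.mk0 jq jq_ne_zero, ⟨1, one_ne_zero, Or.inr (by simp)⟩⟩

/-- The element `z·j ∈ W_ℝ` for `z ∈ ℂˣ`. -/
def zjW (z : ℂ) (hz : z ≠ 0) : WeilR :=
  ⟨Units.mk0 ((z : ℍ[ℝ]) * jq) (mul_ne_zero (coeComplex_ne_zero hz) jq_ne_zero),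
    ⟨z, hz, Or.inr rfl⟩⟩

end

section Helpers

open Complex

lemma cqW_eq {z w : ℂ} {hz : z ≠ 0} {hw : w ≠ 0} (h : z = w) : cqW z hz = cqW w hw := by
  subst h; rfl

lemma cqW_inj {z w : ℂ} {hz : z ≠ 0} {hw : w ≠ 0} (h : cqW z hz = cqW w hw) : z = w := by
  have h1 : ((cqW z hz : (ℍ[ℝ])ˣ) : ℍ[ℝ]) = ((cqW w hw : (ℍ[ℝ])ˣ) : ℍ[ℝ]) := by rw [h]
  have h2 : (z : ℍ[ℝ]) = (w : ℍ[ℝ]) := h1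
  exact Complex.ext (congrArg QuaternionAlgebra.re h2) (congrArg QuaternionAlgebra.imI h2)

lemma cqW_mul (z w : ℂ) (hz : z ≠ 0) (hw : w ≠ 0) :
    cqW z hz * cqW w hw = cqW (z * w) (mul_ne_zero hz hw) := by
  apply Subtype.ext; apply Units.ext
  show (z : ℍ[ℝ]) * (w : ℍ[ℝ]) = ((z * w : ℂ) : ℍ[ℝ])
  exact (Quaternion.coeComplex_mul z w).symm

lemma cqW_inv (z : ℂ) (hz : z ≠ 0) :
    (cqW z hz)⁻¹ = cqW z⁻¹ (inv_ne_zero hz) := by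
  apply Subtype.ext; apply Units.ext
  show ((z : ℍ[ℝ]))⁻¹ = ((z⁻¹ : ℂ) : ℍ[ℝ])
  exact (coeComplex_inv z).symm

lemma jW_mul_cqW (z : ℂ) (hz : z ≠ 0) :
    jW * cqW z hz = cqW ((starRingEnd ℂ) z) (by simpa using hz) * jW := by
  apply Subtype.ext; apply Units.ext
  show jq * (z : ℍ[ℝ]) = ((starRingEnd ℂ) z : ℂ) * jq
  exact jq_mul_coeComplex z

lemma jW_mul_jW : jW * jW = cqW (-1) (by norm_num) := by
  apply Subtype.ext; apply Units.ext
  show jq * jq = ((-1 : ℂ) : ℍ[ℝ])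
  rw [jq_mul_jq, show ((-1 : ℂ) : ℍ[ℝ]) = -((1 : ℂ) : ℍ[ℝ]) from coeComplex_neg 1]
  simp

lemma weil_cases (w : WeilR) : ∃ (z : ℂ) (hz : z ≠ 0),
    w = cqW z hz ∨ w = cqW z hz * jW := by
  obtain ⟨z, hz, h | h⟩ := w.2
  · exact ⟨z, hz, Or.inl (by apply Subtype.ext; apply Units.ext; exact h)⟩
  · refine ⟨z, hz, Or.inr ?_⟩
    apply Subtype.ext; apply Units.ext
    show ((w : (ℍ[ℝ])ˣ) : ℍ[ℝ]) = (z : ℍ[ℝ]) * jq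
    exact h

lemma jW_ne_cqW (z : ℂ) (hz : z ≠ 0) : jW ≠ cqW z hz := by
  intro h
  have h1 : ((jW : (ℍ[ℝ])ˣ) : ℍ[ℝ]) = ((cqW z hz : (ℍ[ℝ])ˣ) : ℍ[ℝ]) := by rw [h]
  have h2 : jq = (z : ℍ[ℝ]) := h1
  have := congrArg QuaternionAlgebra.imJ h2
  simp [jq] at this

lemma tau_jW (τ : WeilR ≃* WeilR)
    (h : ∀ (z : ℂ) (hz : z ≠ 0), τ (cqW z hz) = (cqW z hz)⁻¹) :
    ∃ (c : ℂ) (hc : c ≠ 0), τ jW = cqW c hc * jW ∧ c * (starRingEnd ℂ) c = 1 := by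
  obtain ⟨z, hz, hcase | hcase⟩ := weil_cases (τ jW)
  · exfalso
    have key : τ (cqW z⁻¹ (inv_ne_zero hz)) = cqW z hz := by
      rw [h, cqW_inv]; exact cqW_eq (inv_inv z)
    have : jW = cqW z⁻¹ (inv_ne_zero hz) := τ.injective (hcase.trans key.symm)
    exact jW_ne_cqW _ _ this
  · refine ⟨z, hz, hcase, ?_⟩
    have sq : τ jW * τ jW = cqW (-1) (by norm_num) := by
      rw [← map_mul, jW_mul_jW, h, cqW_inv]
      exact cqW_eq (by norm_num)
    rw [hcase] at sq
    have lhs : (cqW z hz * jW) * (cqW z hz * jW)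
        = cqW (-(z * (starRingEnd ℂ) z)) (by simpa [mul_ne_zero, hz] using hz) := by
      calc (cqW z hz * jW) * (cqW z hz * jW)
          = cqW z hz * (jW * cqW z hz) * jW := by group
        _ = cqW z hz * (cqW ((starRingEnd ℂ) z) (by simpa using hz) * jW) * jW := by
            rw [jW_mul_cqW]
        _ = (cqW z hz * cqW ((starRingEnd ℂ) z) (by simpa using hz)) * (jW * jW) := by group
        _ = cqW (z * (starRingEnd ℂ) z) (by simpa [hz] using hz) * cqW (-1) (by norm_num) := by
            rw [cqW_mul, jW_mul_jW]
        _ = cqW (-(z * (starRingEnd ℂ) z)) (by simpa [hz] using hz) := by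
            rw [cqW_mul]; exact cqW_eq (by ring)
    rw [lhs] at sq
    have := cqW_inj sq
    linear_combination -this

end Helpers

/-- Any two automorphisms of `W_ℝ` inverting `ℂˣ` pointwise are conjugate
by an inner automorphism `int(u)` with `u ∈ ℂˣ`:
`τ₂ = int(u) ∘ τ₁ ∘ int(u)⁻¹`. -/
theorem weil_chevalley_conjugate_by_inner (τ₁ τ₂ : WeilR ≃* WeilR)
    (h₁ : ∀ (z : ℂ) (hz : z ≠ 0), τ₁ (cqW z hz) = (cqW z hz)⁻¹)
    (h₂ : ∀ (z : ℂ) (hz : z ≠ 0), τ₂ (cqW z hz) = (cqW z hz)⁻¹) :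
    ∃ (u : ℂ) (hu : u ≠ 0), ∀ w : WeilR,
      τ₂ w = cqW u hu * τ₁ ((cqW u hu)⁻¹ * w * cqW u hu) * (cqW u hu)⁻¹ := by
  classical
  obtain ⟨c₁, hc₁, hj₁, hn₁⟩ := tau_jW τ₁ h₁
  obtain ⟨c₂, hc₂, hj₂, hn₂⟩ := tau_jW τ₂ h₂
  set w₀ : ℂ := c₂ / c₁ with hw₀def
  have hw₀ : w₀ ≠ 0 := div_ne_zero hc₂ hc₁
  obtain ⟨u, hu4⟩ := IsAlgClosed.exists_pow_nat_eq (k := ℂ) w₀ (n := 4) (by norm_num)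
  have hu : u ≠ 0 := by
    intro h; rw [h] at hu4; simp at hu4; exact hw₀ hu4.symm
  -- conj u = u⁻¹
  have hnw₀ : w₀ * (starRingEnd ℂ) w₀ = 1 := by
    have hcc₁ : (starRingEnd ℂ) c₁ ≠ 0 := by simpa using hc₁
    rw [hw₀def, map_div₀]
    field_simp
    linear_combination (starRingEnd ℂ) c₁ * c₁ * hn₂ - c₂ * (starRingEnd ℂ) c₂ * hn₁
  have hnu : u * (starRingEnd ℂ) u = 1 := by
    have h4 : (u * (starRingEnd ℂ) u) ^ 4 = 1 := by
      rw [mul_pow, ← map_pow, hu4]; exact hnw₀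
    have hre : u * (starRingEnd ℂ) u = ((Complex.normSq u : ℝ) : ℂ) := Complex.mul_conj u
    rw [hre] at h4 ⊢
    norm_cast at h4 ⊢
    have h0 : (0 : ℝ) ≤ Complex.normSq u := Complex.normSq_nonneg u
    nlinarith [sq_nonneg (Complex.normSq u - 1), sq_nonneg (Complex.normSq u + 1),
      sq_nonneg (Complex.normSq u ^ 2 - 1), sq_nonneg (Complex.normSq u ^ 2 + 1)]
  have hconju : (starRingEnd ℂ) u = u⁻¹ := by
    field_simp
    linear_combination hnu
  have hu4' : u ^ 4 * c₁ = c₂ := by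
    rw [hu4, hw₀def]; field_simp
  refine ⟨u, hu, fun w => ?_⟩
  obtain ⟨z, hz, rfl | rfl⟩ := weil_cases w
  · -- w = cqW z
    rw [h₂, cqW_inv, cqW_inv, cqW_mul, cqW_mul, h₁, cqW_inv, cqW_mul, cqW_mul]
    exact cqW_eq (by field_simp)
  · -- w = cqW z * jW
    have hconjz : (starRingEnd ℂ) u ≠ 0 := by simpa using hu
    calc τ₂ (cqW z hz * jW)
        = τ₂ (cqW z hz) * τ₂ jW := map_mul _ _ _
      _ = (cqW z hz)⁻¹ * (cqW c₂ hc₂ * jW) := by rw [h₂, hj₂]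
      _ = cqW (z⁻¹ * c₂) (mul_ne_zero (inv_ne_zero hz) hc₂) * jW := by
          rw [cqW_inv, ← mul_assoc, cqW_mul]
      _ = cqW u hu * τ₁ ((cqW u hu)⁻¹ * (cqW z hz * jW) * cqW u hu) * (cqW u hu)⁻¹ := ?_
    have inner : (cqW u hu)⁻¹ * (cqW z hz * jW) * cqW u hu
        = cqW (u⁻¹ * z * (starRingEnd ℂ) u)
            (mul_ne_zero (mul_ne_zero (inv_ne_zero hu) hz) hconjz) * jW := by
      rw [cqW_inv, mul_assoc, mul_assoc, jW_mul_cqW, ← mul_assoc, ← mul_assoc,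
        cqW_mul, cqW_mul]
    rw [inner, map_mul, h₁, hj₁, cqW_inv]
    rw [show cqW u hu * (cqW (u⁻¹ * z * (starRingEnd ℂ) u)⁻¹ _ * (cqW c₁ hc₁ * jW)) * (cqW u hu)⁻¹
        = cqW u hu * cqW (u⁻¹ * z * (starRingEnd ℂ) u)⁻¹
            (inv_ne_zero (mul_ne_zero (mul_ne_zero (inv_ne_zero hu) hz) hconjz))
          * cqW c₁ hc₁ * (jW * (cqW u hu)⁻¹) from by group]
    rw [cqW_inv, jW_mul_cqW, cqW_mul, cqW_mul, ← mul_assoc, cqW_mul]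
    refine congrArg (· * jW) (cqW_eq ?_)
    rw [hconju, map_inv₀, hconju, inv_inv]
    field_simp
    linear_combination -hu4'
end

section
/- Let w ∈ Sₙ, and let (i₁,…,i_ℓ) be a reduced word for w and (j₁,…,j_m) a reduced word for w⁻¹. Then the product σ(i₁,…,i_ℓ)·σ(j₁,…,j_m) is the diagonal matrix whose k-th diagonal entry is (−1)^{k + w⁻¹(k)} for 1 ≤ k ≤ n. -/
open Matrix

noncomputable section

/-- The element `i` of `{1,…,n−1}` viewed in `Fin n` (0-indexed: position `i`). -/
def finA {n : ℕ} (i : Fin (n - 1)) : Fin n := ⟨i.val, by have := i.isLt; omega⟩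

/-- The element `i+1` of `{1,…,n}` viewed in `Fin n` (0-indexed: position `i+1`). -/
def finB {n : ℕ} (i : Fin (n - 1)) : Fin n := ⟨i.val + 1, by have := i.isLt; omega⟩

/-- The Tits representative `σ_i ∈ GL(n,ℂ)` of the simple reflection `s_i = (i,i+1)`:
it agrees with the identity matrix except in rows and columns `i, i+1`, where its entries
are `(σ_i)_{i,i} = (σ_i)_{i+1,i+1} = 0`, `(σ_i)_{i,i+1} = 1`, `(σ_i)_{i+1,i} = −1`. -/
def sigmaMat (n : ℕ) (i : Fin (n - 1)) : Matrix (Fin n) (Fin n) ℂ :=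
  1 - Matrix.single (finA i) (finA i) 1 - Matrix.single (finB i) (finB i) 1
    + Matrix.single (finA i) (finB i) 1 - Matrix.single (finB i) (finA i) 1

/-- The simple reflection `s_i = (i,i+1)` in the symmetric group `Sₙ`. -/
def simpleRefl {n : ℕ} (i : Fin (n - 1)) : Equiv.Perm (Fin n) := Equiv.swap (finA i) (finB i)

/-- The permutation `s_{i₁} ∘ ⋯ ∘ s_{i_ℓ}` attached to the word `(i₁,…,i_ℓ)`. -/
def wordPerm {n : ℕ} (l : List (Fin (n - 1))) : Equiv.Perm (Fin n) :=
  (l.map simpleRefl).prod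

/-- The matrix `σ(i₁,…,i_ℓ) = σ_{i₁} ⋯ σ_{i_ℓ}` attached to the word `(i₁,…,i_ℓ)`. -/
def wordMat (n : ℕ) (l : List (Fin (n - 1))) : Matrix (Fin n) (Fin n) ℂ :=
  (l.map (sigmaMat n)).prod

/-- The Coxeter length of `w ∈ Sₙ`: the number of inversions. -/
def invCount {n : ℕ} (w : Equiv.Perm (Fin n)) : ℕ :=
  (Finset.univ.filter fun p : Fin n × Fin n => p.1 < p.2 ∧ w p.2 < w p.1).card

/-- `(i₁,…,i_ℓ)` is a reduced word for `w`: the product of the corresponding simple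
reflections is `w` and the length of the word equals the number of inversions of `w`. -/
def IsReducedWord {n : ℕ} (l : List (Fin (n - 1))) (w : Equiv.Perm (Fin n)) : Prop :=
  wordPerm l = w ∧ l.length = invCount w

/-- The diagonal matrix `d` with entries `d_{kk} = (−1)^{k−1}` (1-indexed), used in the
pinned Chevalley involution `C_P(g) = d (gᵀ)⁻¹ d⁻¹` of `GL(n,ℂ)`. -/
def dMat (n : ℕ) : Matrix (Fin n) (Fin n) ℂ := Matrix.diagonal fun k => (-1 : ℂ) ^ (k : ℕ)

end

theorem Equiv.Perm.apply_inv_self {α : Type*} (f : Equiv.Perm α) (x : α) : f (f⁻¹ x) = x :=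
  f.apply_symm_apply x

namespace TitsAux
open Finset
variable {n : ℕ}

/-- sign exponent: inversions of `w` "below" `b`. -/
def invBelow (w : Equiv.Perm (Fin n)) (b : Fin n) : ℕ :=
  (Finset.univ.filter fun j => b < j ∧ w j < w b).card

/-- the signed permutation matrix attached to `w`. -/
noncomputable def mMat (n : ℕ) (w : Equiv.Perm (Fin n)) : Matrix (Fin n) (Fin n) ℂ :=
  Matrix.of fun a b => if a = w b then (-1 : ℂ) ^ invBelow w b else 0

lemma simpleRefl_val (i : Fin (n - 1)) (x : Fin n) :
    ((simpleRefl i) x).val =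
      if x.val = i.val then i.val + 1 else if x.val = i.val + 1 then i.val else x.val := by
  simp only [simpleRefl, Equiv.swap_apply_def, finA, finB, Fin.ext_iff]
  split_ifs <;> simp_all

lemma simpleRefl_mul_self (i : Fin (n - 1)) : simpleRefl (n := n) i * simpleRefl i = 1 :=
  Equiv.swap_mul_self _ _

lemma finA_lt_finB (i : Fin (n - 1)) : finA (n := n) i < finB i := by
  simp [finA, finB, Fin.lt_def]

/-- swap of adjacent values preserves order except on the swapped pair. -/
lemma swap_lt_swap_iff (i : Fin (n - 1)) {x y : Fin n}
    (h1 : ¬(x = finA i ∧ y = finB i)) (h2 : ¬(x = finB i ∧ y = finA i)) :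
    simpleRefl i x < simpleRefl i y ↔ x < y := by
  have hx := simpleRefl_val i x
  have hy := simpleRefl_val i y
  simp only [Fin.ext_iff, finA, finB] at h1 h2
  rw [Fin.lt_def, Fin.lt_def, hx, hy]
  split_ifs <;> omega

lemma invCount_succ (i : Fin (n - 1)) (w : Equiv.Perm (Fin n))
    (h : w⁻¹ (finA i) < w⁻¹ (finB i)) :
    invCount (simpleRefl i * w) = invCount w + 1 := by
  classical
  have hAB : finA (n := n) i < finB i := finA_lt_finB i
  have hinj := w⁻¹.injective
  have hS1 : (Finset.univ.filter fun p : Fin n × Fin n =>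
      p.1 < p.2 ∧ (simpleRefl i * w) p.2 < (simpleRefl i * w) p.1)
      = insert (w⁻¹ (finA i), w⁻¹ (finB i))
        (Finset.univ.filter fun p : Fin n × Fin n => p.1 < p.2 ∧ w p.2 < w p.1) := by
    ext ⟨x, y⟩
    rw [Finset.mem_insert, Finset.mem_filter, Finset.mem_filter]
    simp only [Finset.mem_insert, Finset.mem_filter, Finset.mem_univ, true_and,
      Equiv.Perm.mul_apply, Prod.mk.injEq]
    constructor
    · rintro ⟨hxy, hlt⟩
      by_cases hc1 : w x = finA i ∧ w y = finB i
      · left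
        exact ⟨by rw [← hc1.1]; simp, by rw [← hc1.2]; simp⟩
      · right
        refine ⟨hxy, ?_⟩
        rw [swap_lt_swap_iff i ?_ ?_] at hlt
        · exact hlt
        · rintro ⟨hy, hx⟩
          have hx' : x = w⁻¹ (finB i) := by rw [← hx]; simp
          have hy' : y = w⁻¹ (finA i) := by rw [← hy]; simp
          rw [hx', hy'] at hxy
          exact absurd hxy (not_lt.2 h.le)
        · rintro ⟨hy, hx⟩
          exact hc1 ⟨hx, hy⟩
    · rintro (⟨hx, hy⟩ | ⟨hxy, hlt⟩)
      · subst hx; subst hy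
        refine ⟨h, ?_⟩
        simp only [Equiv.Perm.apply_inv_self]
        simpa [simpleRefl, Equiv.swap_apply_left, Equiv.swap_apply_right] using hAB
      · refine ⟨hxy, ?_⟩
        rw [swap_lt_swap_iff i ?_ ?_]
        · exact hlt
        · rintro ⟨hy, hx⟩
          have hx' : x = w⁻¹ (finB i) := by rw [← hx]; simp
          have hy' : y = w⁻¹ (finA i) := by rw [← hy]; simp
          rw [hx', hy'] at hxy
          exact absurd hxy (not_lt.2 h.le)
        · rintro ⟨hy, hx⟩
          rw [hy, hx] at hlt
          exact absurd hlt (not_lt.2 hAB.le)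
  have hnot : (w⁻¹ (finA i), w⁻¹ (finB i)) ∉
      (Finset.univ.filter fun p : Fin n × Fin n => p.1 < p.2 ∧ w p.2 < w p.1) := by
    simp only [Finset.mem_filter, Finset.mem_univ, true_and, not_and,
      Equiv.Perm.apply_inv_self]
    exact fun _ => not_lt.2 hAB.le
  rw [invCount, invCount, hS1, Finset.card_insert_of_notMem hnot]

lemma invCount_pred (i : Fin (n - 1)) (w : Equiv.Perm (Fin n))
    (h : w⁻¹ (finB i) < w⁻¹ (finA i)) :
    invCount (simpleRefl i * w) + 1 = invCount w := by
  have key := invCount_succ i (simpleRefl i * w) ?_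
  · rw [← mul_assoc, simpleRefl_mul_self, one_mul] at key
    omega
  · rw [_root_.mul_inv_rev]
    simpa [simpleRefl, Equiv.Perm.mul_apply, Equiv.swap_inv,
      Equiv.swap_apply_left, Equiv.swap_apply_right] using h

lemma invCount_le_length (l : List (Fin (n - 1))) : invCount (wordPerm l) ≤ l.length := by
  induction l with
  | nil =>
    have : invCount (wordPerm ([] : List (Fin (n - 1)))) = 0 := by
      rw [wordPerm]; simp only [List.map_nil, List.prod_nil]
      rw [invCount, Finset.card_eq_zero, Finset.filter_eq_empty_iff]
      rintro ⟨p, q⟩ _ ⟨h1, h2⟩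
      simp only [Equiv.Perm.one_apply] at h2
      exact absurd (h1.trans h2) (lt_irrefl _)
    simp [this]
  | cons i l ih =>
    have hw : wordPerm (i :: l) = simpleRefl i * wordPerm l := by
      simp [wordPerm, List.map_cons, List.prod_cons]
    set w := wordPerm l
    have hAB : (w⁻¹ (finA i)) ≠ (w⁻¹ (finB i)) := by
      intro hc
      have := w⁻¹.injective hc
      exact absurd this (Fin.ne_of_lt (finA_lt_finB i))
    rcases lt_or_gt_of_ne hAB with hlt | hgt
    · rw [hw, invCount_succ i w hlt]; simp only [List.length_cons]; omega
    · have := invCount_pred i w hgt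
      rw [hw]; simp only [List.length_cons]; omega


lemma finA_val (i : Fin (n - 1)) : (finA (n := n) i).val = i.val := rfl
lemma finB_val (i : Fin (n - 1)) : (finB (n := n) i).val = i.val + 1 := rfl

lemma simpleRefl_finA (i : Fin (n - 1)) : simpleRefl (n := n) i (finA i) = finB i :=
  Equiv.swap_apply_left _ _

lemma simpleRefl_finB (i : Fin (n - 1)) : simpleRefl (n := n) i (finB i) = finA i :=
  Equiv.swap_apply_right _ _

lemma simpleRefl_apply_of_ne (i : Fin (n - 1)) {x : Fin n} (h1 : x ≠ finA i)
    (h2 : x ≠ finB i) : simpleRefl i x = x :=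
  Equiv.swap_apply_of_ne_of_ne h1 h2

lemma invBelow_case_A (i : Fin (n - 1)) (w : Equiv.Perm (Fin n)) (b : Fin n)
    (hb : w b = finA i) (h : w⁻¹ (finA i) < w⁻¹ (finB i)) :
    invBelow (simpleRefl i * w) b = invBelow w b + 1 := by
  classical
  have hbA : b = w⁻¹ (finA i) := by rw [← hb]; simp
  have hS : (Finset.univ.filter fun j => b < j ∧ (simpleRefl i * w) j < (simpleRefl i * w) b)
      = insert (w⁻¹ (finB i)) (Finset.univ.filter fun j => b < j ∧ w j < w b) := by
    ext j
    simp only [Finset.mem_insert, Finset.mem_filter, Finset.mem_univ, true_and,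
      Equiv.Perm.mul_apply, hb, simpleRefl_finA]
    constructor
    · rintro ⟨hbj, hlt⟩
      by_cases hvB : w j = finB i
      · left; rw [← hvB]; simp
      · right
        have hvA : w j ≠ finA i := by
          intro hc
          have : j = b := by rw [hbA, ← hc]; simp
          exact absurd hbj (by rw [this]; exact lt_irrefl b)
        rw [simpleRefl_apply_of_ne i hvA hvB] at hlt
        refine ⟨hbj, ?_⟩
        rw [Fin.lt_def, finB_val] at hlt
        rw [Fin.lt_def, finA_val]
        have h1 : (w j).val ≠ i.val := by
          intro hc; exact hvA (Fin.ext (by rw [hc, finA_val]))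
        omega
    · rintro (hj | ⟨hbj, hlt⟩)
      · subst hj
        refine ⟨by rw [hbA]; exact h, ?_⟩
        simp only [Equiv.Perm.apply_inv_self, simpleRefl_finB]
        exact finA_lt_finB i
      · rw [Fin.lt_def, finA_val] at hlt
        have hvA : w j ≠ finA i := by
          intro hc; rw [hc, finA_val] at hlt; omega
        have hvB : w j ≠ finB i := by
          intro hc; rw [hc, finB_val] at hlt; omega
        refine ⟨hbj, ?_⟩
        rw [simpleRefl_apply_of_ne i hvA hvB, Fin.lt_def, finB_val]
        omega
  have hnot : w⁻¹ (finB i) ∉ (Finset.univ.filter fun j => b < j ∧ w j < w b) := by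
    simp only [Finset.mem_filter, Finset.mem_univ, true_and, not_and,
      Equiv.Perm.apply_inv_self, hb]
    exact fun _ => not_lt.2 (finA_lt_finB i).le
  rw [invBelow, invBelow, hS, Finset.card_insert_of_notMem hnot]

lemma invBelow_case_B (i : Fin (n - 1)) (w : Equiv.Perm (Fin n)) (b : Fin n)
    (hb : w b = finB i) (h : w⁻¹ (finA i) < w⁻¹ (finB i)) :
    invBelow (simpleRefl i * w) b = invBelow w b := by
  classical
  have hbB : b = w⁻¹ (finB i) := by rw [← hb]; simp
  rw [invBelow, invBelow]
  congr 1
  ext j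
  simp only [Finset.mem_filter, Finset.mem_univ, true_and,
    Equiv.Perm.mul_apply, hb, simpleRefl_finB]
  constructor
  · rintro ⟨hbj, hlt⟩
    have hvB : w j ≠ finB i := by
      intro hc
      have : j = b := by rw [hbB, ← hc]; simp
      exact absurd hbj (by rw [this]; exact lt_irrefl b)
    have hvA : w j ≠ finA i := by
      intro hc
      have : j = w⁻¹ (finA i) := by rw [← hc]; simp
      rw [this, hbB] at hbj
      exact absurd (h.trans hbj) (lt_irrefl _)
    rw [simpleRefl_apply_of_ne i hvA hvB] at hlt
    rw [Fin.lt_def, finA_val] at hlt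
    exact ⟨hbj, by rw [Fin.lt_def, finB_val]; omega⟩
  · rintro ⟨hbj, hlt⟩
    rw [Fin.lt_def, finB_val] at hlt
    have hvB : w j ≠ finB i := by
      intro hc; rw [hc, finB_val] at hlt; omega
    have hvA : w j ≠ finA i := by
      intro hc
      have : j = w⁻¹ (finA i) := by rw [← hc]; simp
      rw [this, hbB] at hbj
      exact absurd (h.trans hbj) (lt_irrefl _)
    have h1 : (w j).val ≠ i.val := fun hc => hvA (Fin.ext (by rw [hc, finA_val]))
    refine ⟨hbj, ?_⟩
    rw [simpleRefl_apply_of_ne i hvA hvB, Fin.lt_def, finA_val]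
    omega

lemma invBelow_case_other (i : Fin (n - 1)) (w : Equiv.Perm (Fin n)) (b : Fin n)
    (hbA : w b ≠ finA i) (hbB : w b ≠ finB i) :
    invBelow (simpleRefl i * w) b = invBelow w b := by
  classical
  have hv1 : (w b).val ≠ i.val := fun hc => hbA (Fin.ext (by rw [hc, finA_val]))
  have hv2 : (w b).val ≠ i.val + 1 := fun hc => hbB (Fin.ext (by rw [hc, finB_val]))
  rw [invBelow, invBelow]
  congr 1
  ext j
  simp only [Finset.mem_filter, Finset.mem_univ, true_and, Equiv.Perm.mul_apply,
    simpleRefl_apply_of_ne i hbA hbB]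
  have hj := simpleRefl_val i (w j)
  constructor
  · rintro ⟨hbj, hlt⟩
    rw [Fin.lt_def, hj] at hlt
    refine ⟨hbj, ?_⟩
    rw [Fin.lt_def]
    split_ifs at hlt <;> omega
  · rintro ⟨hbj, hlt⟩
    rw [Fin.lt_def] at hlt
    refine ⟨hbj, ?_⟩
    rw [Fin.lt_def, hj]
    split_ifs <;> omega

lemma sigmaMat_mul_apply (i : Fin (n - 1)) (M : Matrix (Fin n) (Fin n) ℂ) (a b : Fin n) :
    (sigmaMat n i * M) a b =
      if a = finA i then M (finB i) b
      else if a = finB i then -(M (finA i) b) else M a b := by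
  have hAB : finA (n := n) i ≠ finB i := Fin.ne_of_lt (finA_lt_finB i)
  rw [sigmaMat]
  simp only [Matrix.sub_mul, Matrix.add_mul, Matrix.one_mul, Matrix.sub_apply,
    Matrix.add_apply]
  split_ifs with h1 h2
  · subst h1
    simp [hAB, hAB.symm]
  · subst h2
    simp [hAB, hAB.symm]
  · simp [h1, h2]

lemma mMat_one : mMat n (1 : Equiv.Perm (Fin n)) = 1 := by
  ext a b
  have h0 : invBelow (1 : Equiv.Perm (Fin n)) b = 0 := by
    rw [invBelow, Finset.card_eq_zero, Finset.filter_eq_empty_iff]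
    rintro j - ⟨h1, h2⟩
    simp only [Equiv.Perm.one_apply] at h2
    exact absurd (h1.trans h2) (lt_irrefl _)
  rw [mMat]
  simp only [Matrix.of_apply, Equiv.Perm.one_apply, h0, pow_zero, Matrix.one_apply]

lemma wordMat_eq (l : List (Fin (n - 1))) (w : Equiv.Perm (Fin n))
    (h : IsReducedWord l w) : wordMat n l = mMat n w := by
  induction l generalizing w with
  | nil =>
    obtain ⟨h1, h2⟩ := h
    rw [wordPerm] at h1
    simp only [List.map_nil, List.prod_nil] at h1
    rw [← h1, wordMat]
    simp only [List.map_nil, List.prod_nil]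
    exact mMat_one.symm
  | cons i l ih =>
    obtain ⟨h1, h2⟩ := h
    set w' := wordPerm l with hw'
    have hw : w = simpleRefl i * w' := by
      rw [← h1, hw']
      simp [wordPerm]
    have hABne : (w'⁻¹ (finA i)) ≠ (w'⁻¹ (finB i)) := fun hc =>
      absurd (w'⁻¹.injective hc) (Fin.ne_of_lt (finA_lt_finB i))
    have hle : invCount w' ≤ l.length := by
      rw [hw']; exact invCount_le_length l
    rw [hw, List.length_cons] at h2
    have hcond : w'⁻¹ (finA i) < w'⁻¹ (finB i) := by
      rcases lt_or_gt_of_ne hABne with hlt | hgt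
      · exact hlt
      · exfalso
        have := invCount_pred i w' hgt
        omega
    have hcnt := invCount_succ i w' hcond
    have hM : wordMat n l = mMat n w' := ih w' ⟨hw'.symm, by omega⟩
    have hstep : wordMat n (i :: l) = sigmaMat n i * wordMat n l := by
      rw [wordMat, wordMat]
      simp [List.map_cons, List.prod_cons]
    rw [hw, hstep, hM]
    have hne : finA (n := n) i ≠ finB i := Fin.ne_of_lt (finA_lt_finB i)
    ext a b
    rw [sigmaMat_mul_apply]
    simp only [mMat, Matrix.of_apply, Equiv.Perm.mul_apply]
    by_cases hbA : w' b = finA i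
    · simp only [hbA, simpleRefl_finA, invBelow_case_A i w' b hbA hcond]
      split_ifs <;> simp_all [pow_succ]
    · by_cases hbB : w' b = finB i
      · simp only [hbB, simpleRefl_finB, invBelow_case_B i w' b hbB hcond]
        split_ifs <;> simp_all
      · simp only [simpleRefl_apply_of_ne i hbA hbB, invBelow_case_other i w' b hbA hbB]
        split_ifs <;> simp_all

lemma card_filter_lt_apply (u : Equiv.Perm (Fin n)) (b : Fin n) :
    (Finset.univ.filter fun j : Fin n => u j < u b).card = (u b).val := by
  have h : (Finset.univ.filter fun j : Fin n => u j < u b).card = (Finset.Iio (u b)).card := by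
    apply Finset.card_bij (fun j _ => u j)
    · intro j hj
      simpa using (Finset.mem_filter.1 hj).2
    · intro j _ j' _ hjj'
      exact u.injective hjj'
    · intro v hv
      exact ⟨u⁻¹ v, by simp [Finset.mem_Iio.1 hv], by simp⟩
  rw [h, Fin.card_Iio]

lemma invBelow_add_low (u : Equiv.Perm (Fin n)) (b : Fin n) :
    invBelow u b + (Finset.univ.filter fun j => j < b ∧ u j < u b).card = (u b).val := by
  rw [invBelow, ← Finset.card_union_of_disjoint, ← Finset.filter_or]
  · rw [← card_filter_lt_apply u b]
    congr 1
    ext j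
    simp only [Finset.mem_filter, Finset.mem_univ, true_and]
    constructor
    · rintro (⟨-, h⟩ | ⟨-, h⟩) <;> exact h
    · intro h
      have hne : j ≠ b := fun hc => absurd h (by rw [hc]; exact lt_irrefl _)
      rcases lt_or_gt_of_ne hne with hlt | hgt
      · exact Or.inr ⟨hlt, h⟩
      · exact Or.inl ⟨hgt, h⟩
  · rw [Finset.disjoint_left]
    rintro j hj hj'
    have h1 := (Finset.mem_filter.1 hj).2.1
    have h2 := (Finset.mem_filter.1 hj').2.1
    exact absurd (h1.trans h2) (lt_irrefl _)

lemma invBelow_apply_inv (w : Equiv.Perm (Fin n)) (b : Fin n) :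
    invBelow w (w⁻¹ b) = (Finset.univ.filter fun j => j < b ∧ w⁻¹ b < w⁻¹ j).card := by
  rw [invBelow]
  apply Finset.card_bij (fun j _ => w j)
  · intro j hj
    obtain ⟨h1, h2⟩ := (Finset.mem_filter.1 hj).2
    rw [Equiv.Perm.apply_inv_self] at h2
    simp only [Finset.mem_filter, Finset.mem_univ, true_and]
    exact ⟨h2, by simpa using h1⟩
  · intro j _ j' _ hjj'
    exact w.injective hjj'
  · intro v hv
    obtain ⟨h1, h2⟩ := (Finset.mem_filter.1 hv).2
    refine ⟨w⁻¹ v, ?_, by simp⟩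
    simp only [Finset.mem_filter, Finset.mem_univ, true_and, Equiv.Perm.apply_inv_self]
    exact ⟨h2, h1⟩

lemma split_card (u : Equiv.Perm (Fin n)) (b : Fin n) :
    (Finset.univ.filter fun j => j < b ∧ u b < u j).card
      + (Finset.univ.filter fun j => j < b ∧ u j < u b).card = b.val := by
  rw [← Finset.card_union_of_disjoint, ← Finset.filter_or]
  · have h : (Finset.univ.filter fun j : Fin n =>
        (j < b ∧ u b < u j) ∨ (j < b ∧ u j < u b)) = Finset.Iio b := by
      ext j
      simp only [Finset.mem_filter, Finset.mem_univ, true_and, Finset.mem_Iio]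
      constructor
      · rintro (⟨h, -⟩ | ⟨h, -⟩) <;> exact h
      · intro h
        have hne : u j ≠ u b := fun hc =>
          absurd (u.injective hc ▸ h) (lt_irrefl _)
        rcases lt_or_gt_of_ne hne with hlt | hgt
        · exact Or.inr ⟨h, hlt⟩
        · exact Or.inl ⟨h, hgt⟩
    rw [h, Fin.card_Iio]
  · rw [Finset.disjoint_left]
    rintro j hj hj'
    have h1 := (Finset.mem_filter.1 hj).2.2
    have h2 := (Finset.mem_filter.1 hj').2.2
    exact absurd (h1.trans h2) (lt_irrefl _)

lemma sign_identity (w : Equiv.Perm (Fin n)) (b : Fin n) :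
    ((-1 : ℂ) ^ invBelow w (w⁻¹ b)) * ((-1 : ℂ) ^ invBelow w⁻¹ b)
      = (-1 : ℂ) ^ (b.val + (w⁻¹ b).val) := by
  have h1 := invBelow_add_low w⁻¹ b
  have h2 := invBelow_apply_inv w b
  have h3 := split_card w⁻¹ b
  have key : b.val + (w⁻¹ b).val
      = (invBelow w (w⁻¹ b) + invBelow w⁻¹ b)
        + 2 * (Finset.univ.filter fun j => j < b ∧ w⁻¹ j < w⁻¹ b).card := by omega
  rw [key, pow_add, pow_add, pow_mul]
  norm_num

end TitsAux

/-- If `(i₁,…,i_ℓ)` is a reduced word for `w ∈ Sₙ` and `(j₁,…,j_m)` a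
reduced word for `w⁻¹`, then `σ(i₁,…,i_ℓ)·σ(j₁,…,j_m)` is the diagonal matrix with `k`-th
diagonal entry `(−1)^{k + w⁻¹(k)}`. -/


theorem tits_sigma_mul_sigma_inv (n : ℕ) (hn : 1 ≤ n) (w : Equiv.Perm (Fin n))
    (l m : List (Fin (n - 1))) (hl : IsReducedWord l w) (hm : IsReducedWord m w⁻¹) :
    wordMat n l * wordMat n m =
      Matrix.diagonal (fun k : Fin n => (-1 : ℂ) ^ (k.val + ((w⁻¹) k).val)) := by
  rw [TitsAux.wordMat_eq l w hl, TitsAux.wordMat_eq m w⁻¹ hm]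
  ext a b
  rw [Matrix.mul_apply]
  rw [Finset.sum_eq_single (w⁻¹ b)]
  · simp only [TitsAux.mMat, Matrix.of_apply, Equiv.Perm.apply_inv_self, Matrix.diagonal_apply]
    by_cases hab : a = b
    · subst hab
      simp only [if_pos rfl]
      exact TitsAux.sign_identity w a
    · rw [if_neg hab, if_neg hab, zero_mul]
  · intro c _ hc
    simp only [TitsAux.mMat, Matrix.of_apply]
    rw [if_neg hc, mul_zero]
  · intro h
    exact absurd (Finset.mem_univ _) h
end
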